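/- arXiv:2007.11624 — 7 statements merged into one kernel-verified Lean document; each statement's English description precedes it below -/
import Mathlib

section
/- Let W be a unitary operator on a finite-dimensional complex Hilbert space, let Π be an orthogonal projection (Π = Π*, Π² = Π), and set R = 2Π − 1. Then Π(−W R W* R W)Π = 3 (Π W Π) − 4 (Π W Π)(Π W* Π)(Π W Π). -/
open Matrix
open scoped Matrix.Norms.L2Operator

/-- **Oblivious amplitude amplification identity.**
If `W` is a unitary operator on a finite-dimensional complex Hilbert space (modelled as a
`d × d` complex matrix acting on `ℂ^d`), `Π` is an orthogonal projection (`Π = Π*`, `Π² = Π`)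
and `R = 2Π − 1`, then `Π(−W R W* R W)Π = 3 (ΠWΠ) − 4 (ΠWΠ)(ΠW*Π)(ΠWΠ)`. -/
theorem amplitude_amplification_identity (d : ℕ)
    (W P : Matrix (Fin d) (Fin d) ℂ)
    (hW : W ∈ Matrix.unitaryGroup (Fin d) ℂ)
    (hP_adj : Pᴴ = P) (hP_idem : P * P = P) :
    P * (-(W * ((2 : ℂ) • P - 1) * Wᴴ * ((2 : ℂ) • P - 1) * W)) * P =
      (3 : ℂ) • (P * W * P) -
        (4 : ℂ) • ((P * W * P) * (P * Wᴴ * P) * (P * W * P)) := by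
  have h1 : Wᴴ * W = 1 := hW.1
  have h2 : W * Wᴴ = 1 := hW.2
  have h3 : ∀ X : Matrix (Fin d) (Fin d) ℂ, P * (P * X) = P * X := fun X => by
    rw [← mul_assoc, hP_idem]
  simp only [mul_sub, sub_mul, mul_smul_comm, smul_mul_assoc, mul_one, one_mul,
    mul_assoc, h1, h2, hP_idem, mul_neg, neg_mul, smul_smul, h3]
  module
end

section
/- For every t ≥ 0, the generalized (term-truncated) Taylor approximation satisfies ‖exp(−itH) − U_{\vec{L}}(t)‖ ≤ e^{tΛ} − s_{\vec{L}}(t). In particular, at the step size t_∞ = log 2 / Λ (when Λ > 0), the error of the truncation is at most ε_{\vec{L}} := 2 − s_{\vec{L}}(t_∞). -/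
open Matrix
open scoped Matrix.Norms.L2Operator

/-- The full Hamiltonian `H = Σ_{ℓ=0}^{L-1} α_ℓ h_ℓ` (and, for `m ≤ L`, the partially
truncated Hamiltonian `Σ_{ℓ=0}^{m-1} α_ℓ h_ℓ` consisting of the `m` retained terms). -/
noncomputable def Hpart (d : ℕ) (h : ℕ → Matrix (Fin d) (Fin d) ℂ) (α : ℕ → ℝ) (m : ℕ) :
    Matrix (Fin d) (Fin d) ℂ :=
  ∑ ℓ ∈ Finset.range m, (α ℓ : ℂ) • h ℓ

/-- The generalized (term-truncated) Taylor operator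
`U_{\vec L}(t) = I + Σ_{k=1}^∞ ((−it)^k/k!) ∏_{j=1}^k (Σ_{ℓ=0}^{L_j−1} α_ℓ h_ℓ)`. -/
noncomputable def Utrunc (d : ℕ) (h : ℕ → Matrix (Fin d) (Fin d) ℂ) (α : ℕ → ℝ)
    (Lk : ℕ → ℕ) (t : ℝ) : Matrix (Fin d) (Fin d) ℂ :=
  1 + ∑' k : ℕ, ((-(t : ℂ) * Complex.I) ^ (k + 1) / (Nat.factorial (k + 1) : ℂ)) •
      ((List.range (k + 1)).map (fun j => Hpart d h α (Lk (j + 1)))).prod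

/-- The scalar normalization series `s_{\vec L}(t) = Σ_{k=0}^∞ (t^k/k!) ∏_{j=1}^k Λ_j`,
where `Λ_j = Σ_{ℓ=0}^{L_j−1} α_ℓ`. -/
noncomputable def strunc (α : ℕ → ℝ) (Lk : ℕ → ℕ) (t : ℝ) : ℝ :=
  ∑' k : ℕ, t ^ k / (Nat.factorial k : ℝ) *
      ∏ j ∈ Finset.range k, (∑ ℓ ∈ Finset.range (Lk (j + 1)), α ℓ)

section Aux

variable {d L : ℕ} (hd : 1 ≤ d)
  {h : ℕ → Matrix (Fin d) (Fin d) ℂ} {α : ℕ → ℝ}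
  (hunit : ∀ ℓ < L, h ℓ ∈ Matrix.unitaryGroup (Fin d) ℂ)
  (hα : ∀ ℓ < L, 0 ≤ α ℓ)

include hd hunit hα

lemma aux_norm_Hpart {m : ℕ} (hm : m ≤ L) :
    ‖Hpart d h α m‖ ≤ ∑ ℓ ∈ Finset.range m, α ℓ := by
  haveI : Nonempty (Fin d) := ⟨⟨0, hd⟩⟩
  refine (norm_sum_le _ _).trans (Finset.sum_le_sum fun ℓ hℓ => ?_)
  rw [Finset.mem_range] at hℓ
  have hℓL := lt_of_lt_of_le hℓ hm
  rw [norm_smul, CStarRing.norm_of_mem_unitary (hunit ℓ hℓL), mul_one,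
    Complex.norm_real, Real.norm_eq_abs, abs_of_nonneg (hα ℓ hℓL)]

lemma aux_norm_Hpart_sub {m : ℕ} (hm : m ≤ L) :
    ‖Hpart d h α L - Hpart d h α m‖ ≤
      (∑ ℓ ∈ Finset.range L, α ℓ) - ∑ ℓ ∈ Finset.range m, α ℓ := by
  haveI : Nonempty (Fin d) := ⟨⟨0, hd⟩⟩
  have hsplit : Hpart d h α L - Hpart d h α m = ∑ ℓ ∈ Finset.Ico m L, (α ℓ : ℂ) • h ℓ := by
    rw [Hpart, Hpart, Finset.range_eq_Ico,
      ← Finset.sum_Ico_consecutive _ (Nat.zero_le m) hm, ← Finset.range_eq_Ico, add_sub_cancel_left]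
  rw [hsplit, ← Finset.sum_Ico_eq_sub _ hm]
  refine (norm_sum_le _ _).trans (Finset.sum_le_sum fun ℓ hℓ => ?_)
  rw [Finset.mem_Ico] at hℓ
  rw [norm_smul, CStarRing.norm_of_mem_unitary (hunit ℓ hℓ.2), mul_one,
    Complex.norm_real, Real.norm_eq_abs, abs_of_nonneg (hα ℓ hℓ.2)]

lemma aux_norm_listprod (f : ℕ → ℕ) (hf : ∀ j, f j ≤ L) (k : ℕ) :
    ‖((List.range k).map (fun j => Hpart d h α (f j))).prod‖ ≤
      ∏ j ∈ Finset.range k, ∑ ℓ ∈ Finset.range (f j), α ℓ := by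
  haveI : Nonempty (Fin d) := ⟨⟨0, hd⟩⟩
  induction k with
  | zero => simp
  | succ k ih =>
    rw [List.range_succ, List.map_append, List.prod_append, Finset.prod_range_succ]
    simp only [List.map_cons, List.map_nil, List.prod_cons, List.prod_nil, mul_one]
    refine (norm_mul_le _ _).trans ?_
    exact mul_le_mul ih (aux_norm_Hpart hd hunit hα (hf k)) (norm_nonneg _)
      (Finset.prod_nonneg fun j _ => Finset.sum_nonneg fun ℓ hℓ =>
        hα ℓ (lt_of_lt_of_le (Finset.mem_range.mp hℓ) (hf j)))

lemma aux_key (f : ℕ → ℕ) (hf : ∀ j, f j ≤ L) (k : ℕ) :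
    ‖(Hpart d h α L) ^ k - ((List.range k).map (fun j => Hpart d h α (f j))).prod‖ ≤
      (∑ ℓ ∈ Finset.range L, α ℓ) ^ k -
        ∏ j ∈ Finset.range k, ∑ ℓ ∈ Finset.range (f j), α ℓ := by
  haveI : Nonempty (Fin d) := ⟨⟨0, hd⟩⟩
  induction k with
  | zero => simp
  | succ k ih =>
    rw [List.range_succ, List.map_append, List.prod_append, Finset.prod_range_succ,
      pow_succ]
    simp only [List.map_cons, List.map_nil, List.prod_cons, List.prod_nil, mul_one]
    set H := Hpart d h α L
    set P := ((List.range k).map (fun j => Hpart d h α (f j))).prod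
    set A := Hpart d h α (f k)
    set Λ := ∑ ℓ ∈ Finset.range L, α ℓ
    set p := ∏ j ∈ Finset.range k, ∑ ℓ ∈ Finset.range (f j), α ℓ
    set lam := ∑ ℓ ∈ Finset.range (f k), α ℓ
    have hid : H ^ k * H - P * A = (H ^ k - P) * H + P * (H - A) := by noncomm_ring
    rw [hid]
    have hp0 : 0 ≤ p := Finset.prod_nonneg fun j _ => Finset.sum_nonneg fun ℓ hℓ =>
      hα ℓ (lt_of_lt_of_le (Finset.mem_range.mp hℓ) (hf j))
    have h1 : ‖(H ^ k - P) * H‖ ≤ (Λ ^ k - p) * Λ :=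
      (norm_mul_le _ _).trans (mul_le_mul ih (aux_norm_Hpart hd hunit hα le_rfl)
        (norm_nonneg _) (le_trans (norm_nonneg _) ih))
    have h2 : ‖P * (H - A)‖ ≤ p * (Λ - lam) :=
      (norm_mul_le _ _).trans (mul_le_mul (aux_norm_listprod hd hunit hα f hf k)
        (aux_norm_Hpart_sub hd hunit hα (hf k)) (norm_nonneg _) hp0)
    calc ‖(H ^ k - P) * H + P * (H - A)‖ ≤ ‖(H ^ k - P) * H‖ + ‖P * (H - A)‖ :=
          norm_add_le _ _
      _ ≤ (Λ ^ k - p) * Λ + p * (Λ - lam) := add_le_add h1 h2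
      _ = Λ ^ k * Λ - p * lam := by ring

end Aux

section Main

variable {d L : ℕ} (hd : 1 ≤ d)
  {h : ℕ → Matrix (Fin d) (Fin d) ℂ} {α : ℕ → ℝ}
  (hunit : ∀ ℓ < L, h ℓ ∈ Matrix.unitaryGroup (Fin d) ℂ)
  (hα : ∀ ℓ < L, 0 ≤ α ℓ)
  (Lk : ℕ → ℕ) (hLk : ∀ k, Lk k ≤ L)

include hd hunit hα hLk

lemma aux_main (t : ℝ) (ht : 0 ≤ t) :
    ‖NormedSpace.exp ((-(t : ℂ) * Complex.I) • Hpart d h α L) -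
        Utrunc d h α Lk t‖ ≤
      Real.exp (t * ∑ ℓ ∈ Finset.range L, α ℓ) - strunc α Lk t := by
  haveI : Nonempty (Fin d) := ⟨⟨0, hd⟩⟩
  set Λ := ∑ ℓ ∈ Finset.range L, α ℓ with hΛdef
  set H := Hpart d h α L with hHdef
  set c : ℕ → ℂ := fun n => (-(t : ℂ) * Complex.I) ^ n / (Nat.factorial n : ℂ) with hcdef
  set P : ℕ → Matrix (Fin d) (Fin d) ℂ :=
    fun k => ((List.range k).map (fun j => Hpart d h α (Lk (j + 1)))).prod with hPdef
  set lam : ℕ → ℝ := fun k => ∏ j ∈ Finset.range k, ∑ ℓ ∈ Finset.range (Lk (j + 1)), α ℓ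
    with hlamdef
  -- basic facts
  have hΛ0 : 0 ≤ Λ := Finset.sum_nonneg fun ℓ hℓ => hα ℓ (Finset.mem_range.mp hℓ)
  have hlam_nonneg : ∀ k, 0 ≤ lam k := fun k =>
    Finset.prod_nonneg fun j _ => Finset.sum_nonneg fun ℓ hℓ =>
      hα ℓ (lt_of_lt_of_le (Finset.mem_range.mp hℓ) (hLk (j + 1)))
  have hlam_le : ∀ k, lam k ≤ Λ ^ k := fun k => by
    rw [show Λ ^ k = ∏ _j ∈ Finset.range k, Λ by
      rw [Finset.prod_const, Finset.card_range]]
    refine Finset.prod_le_prod (fun j _ => Finset.sum_nonneg fun ℓ hℓ =>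
      hα ℓ (lt_of_lt_of_le (Finset.mem_range.mp hℓ) (hLk (j + 1)))) (fun j _ => ?_)
    exact Finset.sum_le_sum_of_subset_of_nonneg
      (Finset.range_subset_range.mpr (hLk (j + 1))) (fun ℓ hℓ _ => hα ℓ (Finset.mem_range.mp hℓ))
  have hnc : ∀ n, ‖c n‖ = t ^ n / (Nat.factorial n : ℝ) := fun n => by
    simp [hcdef, norm_div, norm_pow, norm_neg, norm_mul, Complex.norm_I,
      Complex.norm_real, Real.norm_eq_abs, abs_of_nonneg ht]
  have hnH : ∀ n : ℕ, ‖H ^ n‖ ≤ Λ ^ n := by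
    intro n
    induction n with
    | zero => simp
    | succ n ih =>
      rw [pow_succ, pow_succ]
      exact (norm_mul_le _ _).trans
        (mul_le_mul ih (aux_norm_Hpart hd hunit hα le_rfl) (norm_nonneg _)
          (pow_nonneg hΛ0 n))
  -- the series terms
  set F : ℕ → Matrix (Fin d) (Fin d) ℂ := fun n => c n • H ^ n with hFdef
  set G : ℕ → Matrix (Fin d) (Fin d) ℂ := fun k => c (k + 1) • P (k + 1) with hGdef
  set b : ℕ → ℝ := fun k => t ^ (k + 1) / (Nat.factorial (k + 1) : ℝ) *
    (Λ ^ (k + 1) - lam (k + 1)) with hbdef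
  set s0 : ℕ → ℝ := fun n => t ^ n / (Nat.factorial n : ℝ) * lam n with hs0def
  have hsum_exp : Summable (fun n => (t * Λ) ^ n / (Nat.factorial n : ℝ)) :=
    Real.summable_pow_div_factorial _
  have htΛ : ∀ n : ℕ, t ^ n / (Nat.factorial n : ℝ) * Λ ^ n
      = (t * Λ) ^ n / (Nat.factorial n : ℝ) := fun n => by rw [mul_pow]; ring
  have hFle : ∀ n, ‖F n‖ ≤ (t * Λ) ^ n / (Nat.factorial n : ℝ) := fun n => by
    rw [hFdef, norm_smul, hnc, ← htΛ n]
    exact mul_le_mul_of_nonneg_left (hnH n)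
      (div_nonneg (pow_nonneg ht n) (Nat.cast_nonneg _))
  have hGle : ∀ k, ‖G k‖ ≤ (t * Λ) ^ (k + 1) / (Nat.factorial (k + 1) : ℝ) := fun k => by
    rw [hGdef, norm_smul, hnc, ← htΛ (k + 1)]
    refine mul_le_mul_of_nonneg_left ?_
      (div_nonneg (pow_nonneg ht _) (Nat.cast_nonneg _))
    exact (aux_norm_listprod hd hunit hα _ (fun j => hLk (j + 1)) (k + 1)).trans
      (hlam_le (k + 1))
  have hsF : Summable F := Summable.of_norm_bounded hsum_exp hFle
  have hsum_exp1 : Summable (fun k => (t * Λ) ^ (k + 1) / (Nat.factorial (k + 1) : ℝ)) :=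
    hsum_exp.comp_injective Nat.succ_injective
  have hsG : Summable G := Summable.of_norm_bounded hsum_exp1 hGle
  have hsF1 : Summable (fun k => F (k + 1)) := hsF.comp_injective Nat.succ_injective
  have hs0 : Summable s0 := by
    refine Summable.of_nonneg_of_le (fun n => mul_nonneg
      (div_nonneg (pow_nonneg ht n) (Nat.cast_nonneg _)) (hlam_nonneg n)) (fun n => ?_)
      hsum_exp
    rw [← htΛ n]
    exact mul_le_mul_of_nonneg_left (hlam_le n)
      (div_nonneg (pow_nonneg ht n) (Nat.cast_nonneg _))
  have hs0' : Summable (fun k => s0 (k + 1)) := hs0.comp_injective Nat.succ_injective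
  have hb_eq : ∀ k, b k = (t * Λ) ^ (k + 1) / (Nat.factorial (k + 1) : ℝ) - s0 (k + 1) :=
    fun k => by rw [hbdef, hs0def]; simp only; rw [← htΛ (k + 1)]; ring
  have hsb : Summable b := by
    simp only [funext hb_eq]
    exact hsum_exp1.sub hs0'
  -- the key pointwise bound
  have hdiff_le : ∀ k, ‖F (k + 1) - G k‖ ≤ b k := fun k => by
    rw [hFdef, hGdef, ← smul_sub, norm_smul, hnc, hbdef]
    exact mul_le_mul_of_nonneg_left
      (aux_key hd hunit hα (fun j => Lk (j + 1)) (fun j => hLk (j + 1)) (k + 1))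
      (div_nonneg (pow_nonneg ht _) (Nat.cast_nonneg _))
  -- exp expansion
  have hexp : NormedSpace.exp ((-(t : ℂ) * Complex.I) • H) = ∑' n, F n := by
    rw [NormedSpace.exp_eq_tsum ℂ]
    refine tsum_congr fun n => ?_
    rw [smul_pow, smul_smul, hFdef, hcdef]
    simp only
    rw [div_eq_mul_inv, mul_comm]
  have hF0 : F 0 = 1 := by simp [hFdef, hcdef]
  have hsplit : (∑' n, F n) = 1 + ∑' k, F (k + 1) := by
    rw [Summable.tsum_eq_zero_add hsF, hF0]
  have hUdef : Utrunc d h α Lk t = 1 + ∑' k, G k := rfl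
  have hmain : NormedSpace.exp ((-(t : ℂ) * Complex.I) • H) - Utrunc d h α Lk t
      = ∑' k, (F (k + 1) - G k) := by
    rw [hexp, hsplit, hUdef, Summable.tsum_sub hsF1 hsG]
    abel
  -- RHS identity
  have hrhs : Real.exp (t * Λ) - strunc α Lk t = ∑' k, b k := by
    have hexpℝ : Real.exp (t * Λ) = ∑' n, (t * Λ) ^ n / (Nat.factorial n : ℝ) := by
      rw [Real.exp_eq_exp_ℝ, NormedSpace.exp_eq_tsum_div]
    have hstr : strunc α Lk t = ∑' n, s0 n := rfl
    rw [hexpℝ, hstr, ← Summable.tsum_sub hsum_exp hs0,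
      Summable.tsum_eq_zero_add (hsum_exp.sub hs0)]
    have h0 : (t * Λ) ^ 0 / (Nat.factorial 0 : ℝ) - s0 0 = 0 := by
      simp [hs0def, hlamdef]
    rw [h0, zero_add]
    exact tsum_congr fun k => (hb_eq k).symm
  rw [hmain, hrhs]
  refine (norm_tsum_le_tsum_norm ?_).trans (Summable.tsum_le_tsum hdiff_le ?_ hsb)
  · exact Summable.of_nonneg_of_le (fun k => norm_nonneg _) hdiff_le hsb
  · exact Summable.of_nonneg_of_le (fun k => norm_nonneg _) hdiff_le hsb

end Main

/-- **Error bound for the generalized truncated Taylor expansion.** For every `t ≥ 0`,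
`‖exp(−itH) − U_{\vec L}(t)‖ ≤ e^{tΛ} − s_{\vec L}(t)`; in particular, when `Λ > 0`, at the
step size `t_∞ = log 2 / Λ` the error is at most `ε_{\vec L} = 2 − s_{\vec L}(t_∞)`. -/
theorem generalized_truncation_error_bound (d L : ℕ) (hd : 1 ≤ d) (hL : 1 ≤ L)
    (h : ℕ → Matrix (Fin d) (Fin d) ℂ) (α : ℕ → ℝ)
    (hunit : ∀ ℓ < L, h ℓ ∈ Matrix.unitaryGroup (Fin d) ℂ)
    (hα : ∀ ℓ < L, 0 ≤ α ℓ)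
    (Lk : ℕ → ℕ) (hLk : ∀ k, Lk k ≤ L) :
    (∀ t : ℝ, 0 ≤ t →
      ‖NormedSpace.exp ((-(t : ℂ) * Complex.I) • Hpart d h α L) -
          Utrunc d h α Lk t‖ ≤
        Real.exp (t * ∑ ℓ ∈ Finset.range L, α ℓ) - strunc α Lk t) ∧
    (0 < ∑ ℓ ∈ Finset.range L, α ℓ →
      ‖NormedSpace.exp
            ((-(Real.log 2 / ∑ ℓ ∈ Finset.range L, α ℓ : ℝ) * Complex.I) • Hpart d h α L) -
          Utrunc d h α Lk (Real.log 2 / ∑ ℓ ∈ Finset.range L, α ℓ)‖ ≤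
        2 - strunc α Lk (Real.log 2 / ∑ ℓ ∈ Finset.range L, α ℓ)) := by
  constructor
  · exact fun t ht => aux_main hd hunit hα Lk hLk t ht
  · intro hΛ
    have ht : 0 ≤ Real.log 2 / ∑ ℓ ∈ Finset.range L, α ℓ :=
      div_nonneg (Real.log_nonneg one_le_two) hΛ.le
    have hmain := aux_main hd hunit hα Lk hLk _ ht
    rwa [div_mul_cancel₀ _ hΛ.ne', Real.exp_log two_pos] at hmain
end

section
/- Let U be a unitary d×d complex matrix and Ũ any d×d complex matrix with ‖Ũ − U‖ ≤ ε for some 0 ≤ ε ≤ 1/2. Put s = 2 − ε and define Ã = (3/s) Ũ − (4/s³) Ũ Ũ* Ũ. Then ‖Ã − U‖ ≤ ε + 8ε². -/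
open Matrix
open scoped Matrix.Norms.L2Operator

private lemma amplified_real_ineq (ε : ℝ) (hε0 : 0 ≤ ε) (hε : ε ≤ 1 / 2) :
    |3 / (2 - ε) - 1 - 4 / (2 - ε) ^ 3| + |3 / (2 - ε) - 2 * (4 / (2 - ε) ^ 3)| * ε +
      4 / (2 - ε) ^ 3 * ε + 4 / (2 - ε) ^ 3 * (3 * ε ^ 2 + ε ^ 3) ≤ ε + 8 * ε ^ 2 := by
  have hr : (0:ℝ) < 2 - ε := by linarith
  have hr3 : (0:ℝ) < (2 - ε) ^ 3 := by positivity
  have e1 : 3 / (2 - ε) - 1 - 4 / (2 - ε) ^ 3 = (ε ^ 3 - 3 * ε ^ 2) / (2 - ε) ^ 3 := by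
    field_simp; ring
  have e2 : 3 / (2 - ε) - 2 * (4 / (2 - ε) ^ 3) = (4 - 12 * ε + 3 * ε ^ 2) / (2 - ε) ^ 3 := by
    field_simp; ring
  rw [e1, e2, abs_div, abs_div, abs_of_pos hr3]
  have h1 : |ε ^ 3 - 3 * ε ^ 2| ≤ 3 * ε ^ 2 := by
    rw [abs_le]; constructor <;> nlinarith
  have e3 : |ε ^ 3 - 3 * ε ^ 2| / (2 - ε) ^ 3 + |4 - 12 * ε + 3 * ε ^ 2| / (2 - ε) ^ 3 * ε +
      4 / (2 - ε) ^ 3 * ε + 4 / (2 - ε) ^ 3 * (3 * ε ^ 2 + ε ^ 3) =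
      (|ε ^ 3 - 3 * ε ^ 2| + |4 - 12 * ε + 3 * ε ^ 2| * ε + 4 * ε + 4 * (3 * ε ^ 2 + ε ^ 3)) /
        (2 - ε) ^ 3 := by ring
  rw [e3, div_le_iff₀ hr3]
  rcases le_or_gt 0 (4 - 12 * ε + 3 * ε ^ 2) with h | h
  · rw [abs_of_nonneg h]
    nlinarith [sq_nonneg ε, mul_nonneg hε0 hε0, mul_nonneg (mul_nonneg hε0 hε0) hε0,
      mul_nonneg (mul_nonneg (mul_nonneg hε0 hε0) hε0) hε0, h1, abs_nonneg (ε ^ 3 - 3 * ε ^ 2)]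
  · rw [abs_of_neg h]
    nlinarith [sq_nonneg ε, mul_nonneg hε0 hε0, mul_nonneg (mul_nonneg hε0 hε0) hε0,
      mul_nonneg (mul_nonneg (mul_nonneg hε0 hε0) hε0) hε0, h1,
      mul_nonneg (mul_nonneg hε0 hε0) (by linarith : (0:ℝ) ≤ 1/2 - ε),
      mul_nonneg hε0 (by linarith : (0:ℝ) ≤ 1/2 - ε)]

/-- **Error of one round of oblivious amplitude amplification.** If `U` is unitary,
`‖Ũ − U‖ ≤ ε` with `0 ≤ ε ≤ 1/2`, `s = 2 − ε`, and
`Ã = (3/s) Ũ − (4/s³) Ũ Ũ* Ũ`, then `‖Ã − U‖ ≤ ε + 8ε²`. -/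
theorem amplified_operator_error (d : ℕ) (U Ut : Matrix (Fin d) (Fin d) ℂ)
    (hU : U ∈ Matrix.unitaryGroup (Fin d) ℂ)
    (ε : ℝ) (hε0 : 0 ≤ ε) (hε : ε ≤ 1 / 2)
    (hUt : ‖Ut - U‖ ≤ ε) :
    ‖((3 / (2 - ε) : ℝ) : ℂ) • Ut -
        ((4 / (2 - ε) ^ 3 : ℝ) : ℂ) • (Ut * Utᴴ * Ut) - U‖ ≤ ε + 8 * ε ^ 2 := by
  have hr : (0:ℝ) < 2 - ε := by linarith
  have hr3 : (0:ℝ) < (2 - ε) ^ 3 := by positivity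
  have h1 : Uᴴ * U = 1 := by simpa [Matrix.star_eq_conjTranspose] using hU.1
  have h2 : U * Uᴴ = 1 := by simpa [Matrix.star_eq_conjTranspose] using hU.2
  set E : Matrix (Fin d) (Fin d) ℂ := Ut - U with hEdef
  have hUtE : Ut = U + E := by rw [hEdef]; abel
  have hEn : ‖E‖ ≤ ε := hUt
  have hEH : ‖Eᴴ‖ ≤ ε := by rw [Matrix.l2_opNorm_conjTranspose]; exact hEn
  have hone : ‖(1 : Matrix (Fin d) (Fin d) ℂ)‖ ≤ 1 := by
    rw [Matrix.cstar_norm_def, _root_.map_one, ContinuousLinearMap.one_def]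
    exact ContinuousLinearMap.norm_id_le
  have hU1 : ‖U‖ ≤ 1 := by
    have hsq : ‖Uᴴ * U‖ = ‖U‖ * ‖U‖ := Matrix.l2_opNorm_conjTranspose_mul_self U
    rw [h1] at hsq
    nlinarith [norm_nonneg U, hone]
  set a : ℂ := ((3 / (2 - ε) : ℝ) : ℂ) with hadef
  set b : ℂ := ((4 / (2 - ε) ^ 3 : ℝ) : ℂ) with hbdef
  set M : Matrix (Fin d) (Fin d) ℂ :=
    U * Eᴴ * E + E * Uᴴ * E + E * Eᴴ * U + E * Eᴴ * E with hMdef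
  have hmul : Ut * Utᴴ * Ut = U + (E + E) + U * Eᴴ * U + M := by
    rw [hUtE, hMdef]
    have expand : (U + E) * (U + E)ᴴ * (U + E) =
        U * Uᴴ * U + U * Uᴴ * E + U * Eᴴ * U + U * Eᴴ * E +
        E * Uᴴ * U + E * Uᴴ * E + E * Eᴴ * U + E * Eᴴ * E := by
      rw [conjTranspose_add]; noncomm_ring
    rw [expand, h2, mul_assoc E Uᴴ U, h1, one_mul, one_mul, mul_one]
    noncomm_ring
  have key : a • Ut - b • (Ut * Utᴴ * Ut) - U =
      (a - 1 - b) • U + (a - 2 * b) • E + (-b) • (U * Eᴴ * U) + (-b) • M := by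
    rw [hmul, hUtE]; module
  rw [key]
  -- norms of the scalar coefficients
  have hca : ‖a - 1 - b‖ = |3 / (2 - ε) - 1 - 4 / (2 - ε) ^ 3| := by
    rw [hadef, hbdef]
    rw [show ((3 / (2 - ε) : ℝ) : ℂ) - 1 - ((4 / (2 - ε) ^ 3 : ℝ) : ℂ)
        = ((3 / (2 - ε) - 1 - 4 / (2 - ε) ^ 3 : ℝ) : ℂ) by push_cast; ring]
    rw [Complex.norm_real, Real.norm_eq_abs]
  have hcb : ‖a - 2 * b‖ = |3 / (2 - ε) - 2 * (4 / (2 - ε) ^ 3)| := by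
    rw [hadef, hbdef]
    rw [show ((3 / (2 - ε) : ℝ) : ℂ) - 2 * ((4 / (2 - ε) ^ 3 : ℝ) : ℂ)
        = ((3 / (2 - ε) - 2 * (4 / (2 - ε) ^ 3) : ℝ) : ℂ) by push_cast; ring]
    rw [Complex.norm_real, Real.norm_eq_abs]
  have hcnb : ‖-b‖ = 4 / (2 - ε) ^ 3 := by
    rw [norm_neg, hbdef, Complex.norm_real, Real.norm_eq_abs, abs_of_pos (by positivity)]
  -- norms of the matrix pieces
  have hUEU : ‖U * Eᴴ * U‖ ≤ ε := by
    calc ‖U * Eᴴ * U‖ ≤ ‖U * Eᴴ‖ * ‖U‖ := norm_mul_le _ _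
      _ ≤ ‖U‖ * ‖Eᴴ‖ * ‖U‖ :=
        mul_le_mul_of_nonneg_right (norm_mul_le _ _) (norm_nonneg _)
      _ ≤ 1 * ε * 1 := by
        gcongr <;> first | exact hU1 | exact hEH | exact norm_nonneg _ | positivity
      _ = ε := by ring
  have hUH1 : ‖Uᴴ‖ ≤ 1 := by rw [Matrix.l2_opNorm_conjTranspose]; exact hU1
  have tbound : ∀ (X Y Z : Matrix (Fin d) (Fin d) ℂ) (x y z : ℝ),
      ‖X‖ ≤ x → ‖Y‖ ≤ y → ‖Z‖ ≤ z → 0 ≤ x → 0 ≤ y → 0 ≤ z →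
      ‖X * Y * Z‖ ≤ x * y * z := by
    intro X Y Z x y z hx hy hz hx0 hy0 hz0
    calc ‖X * Y * Z‖ ≤ ‖X * Y‖ * ‖Z‖ := norm_mul_le _ _
      _ ≤ ‖X‖ * ‖Y‖ * ‖Z‖ :=
        mul_le_mul_of_nonneg_right (norm_mul_le _ _) (norm_nonneg _)
      _ ≤ x * y * z := by
        gcongr <;> first | assumption | exact norm_nonneg _
  have hM : ‖M‖ ≤ 3 * ε ^ 2 + ε ^ 3 := by
    have b1 := tbound U Eᴴ E 1 ε ε hU1 hEH hEn zero_le_one hε0 hε0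
    have b2 := tbound E Uᴴ E ε 1 ε hEn hUH1 hEn hε0 zero_le_one hε0
    have b3 := tbound E Eᴴ U ε ε 1 hEn hEH hU1 hε0 hε0 zero_le_one
    have b4 := tbound E Eᴴ E ε ε ε hEn hEH hEn hε0 hε0 hε0
    rw [hMdef]
    calc ‖U * Eᴴ * E + E * Uᴴ * E + E * Eᴴ * U + E * Eᴴ * E‖
        ≤ ‖U * Eᴴ * E + E * Uᴴ * E + E * Eᴴ * U‖ + ‖E * Eᴴ * E‖ := norm_add_le _ _
      _ ≤ ‖U * Eᴴ * E + E * Uᴴ * E‖ + ‖E * Eᴴ * U‖ + ‖E * Eᴴ * E‖ := by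
          gcongr; exact norm_add_le _ _
      _ ≤ ‖U * Eᴴ * E‖ + ‖E * Uᴴ * E‖ + ‖E * Eᴴ * U‖ + ‖E * Eᴴ * E‖ := by
          gcongr; exact norm_add_le _ _
      _ ≤ 3 * ε ^ 2 + ε ^ 3 := by nlinarith
  -- put everything together
  calc ‖(a - 1 - b) • U + (a - 2 * b) • E + (-b) • (U * Eᴴ * U) + (-b) • M‖
      ≤ ‖(a - 1 - b) • U‖ + ‖(a - 2 * b) • E‖ + ‖(-b) • (U * Eᴴ * U)‖ + ‖(-b) • M‖ := by
        refine le_trans (norm_add_le _ _) ?_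
        gcongr
        refine le_trans (norm_add_le _ _) ?_
        gcongr
        exact norm_add_le _ _
    _ ≤ |3 / (2 - ε) - 1 - 4 / (2 - ε) ^ 3| + |3 / (2 - ε) - 2 * (4 / (2 - ε) ^ 3)| * ε +
        4 / (2 - ε) ^ 3 * ε + 4 / (2 - ε) ^ 3 * (3 * ε ^ 2 + ε ^ 3) := by
        rw [norm_smul, norm_smul, norm_smul, norm_smul, hca, hcb, hcnb]
        gcongr <;> first
          | exact mul_le_of_le_one_right (abs_nonneg _) hU1
          | exact hEn
          | exact hUEU
          | exact hM
          | positivity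
    _ ≤ ε + 8 * ε ^ 2 := amplified_real_ineq ε hε0 hε
end

section
/- Suppose additionally that H is Hermitian and Λ > 0, and set t_∞ = log 2 / Λ, s = s_{\vec{L}}(t_∞), and ε = 2 − s. Assume ε ≤ 1/2, and define Ã = (3/s) U_{\vec{L}}(t_∞) − (4/s³) U_{\vec{L}}(t_∞) U_{\vec{L}}(t_∞)* U_{\vec{L}}(t_∞). Then for every number of steps r ∈ ℕ, ‖exp(−i r t_∞ H) − Ã^r‖ ≤ r (ε + 8ε²) (1 + ε + 8ε²)^{r−1}. -/
open Matrix
open scoped Matrix.Norms.L2Operator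

/-- The effective operator of one amplified step,
`Ã = (3/s) U_{\vec L}(t_∞) − (4/s³) U_{\vec L}(t_∞) U_{\vec L}(t_∞)* U_{\vec L}(t_∞)`,
where `t_∞ = log 2 / Λ` and `s = s_{\vec L}(t_∞)`. -/
noncomputable def Atilde (d : ℕ) (h : ℕ → Matrix (Fin d) (Fin d) ℂ) (α : ℕ → ℝ)
    (Lk : ℕ → ℕ) (tinf s : ℝ) : Matrix (Fin d) (Fin d) ℂ :=
  ((3 / s : ℝ) : ℂ) • Utrunc d h α Lk tinf -
    ((4 / s ^ 3 : ℝ) : ℂ) • (Utrunc d h α Lk tinf * (Utrunc d h α Lk tinf)ᴴ *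
      Utrunc d h α Lk tinf)

namespace TTEaux

open NormedSpace

lemma norm_unitary {d : ℕ} (hd : 1 ≤ d) {A : Matrix (Fin d) (Fin d) ℂ}
    (hA : A ∈ Matrix.unitaryGroup (Fin d) ℂ) : ‖A‖ = 1 := by
  haveI : Nonempty (Fin d) := ⟨⟨0, hd⟩⟩
  have h1 : Aᴴ * A = 1 := hA.1
  have := Matrix.l2_opNorm_conjTranspose_mul_self A
  rw [h1, norm_one] at this
  nlinarith [norm_nonneg A]

lemma norm_sum_le' {d L : ℕ} (hd : 1 ≤ d) (h : ℕ → Matrix (Fin d) (Fin d) ℂ) (α : ℕ → ℝ)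
    (hunit : ∀ ℓ < L, h ℓ ∈ Matrix.unitaryGroup (Fin d) ℂ)
    (hα : ∀ ℓ < L, 0 ≤ α ℓ) (S : Finset ℕ) (hS : S ⊆ Finset.range L) :
    ‖∑ ℓ ∈ S, (α ℓ : ℂ) • h ℓ‖ ≤ ∑ ℓ ∈ S, α ℓ := by
  refine (norm_sum_le _ _).trans ?_
  refine Finset.sum_le_sum fun ℓ hℓ => ?_
  have hℓL : ℓ < L := Finset.mem_range.mp (hS hℓ)
  rw [norm_smul, norm_unitary hd (hunit ℓ hℓL), mul_one]
  simp [abs_of_nonneg (hα ℓ hℓL)]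

lemma norm_Hpart {d L : ℕ} (hd : 1 ≤ d) (h : ℕ → Matrix (Fin d) (Fin d) ℂ) (α : ℕ → ℝ)
    (hunit : ∀ ℓ < L, h ℓ ∈ Matrix.unitaryGroup (Fin d) ℂ)
    (hα : ∀ ℓ < L, 0 ≤ α ℓ) {m : ℕ} (hm : m ≤ L) :
    ‖Hpart d h α m‖ ≤ ∑ ℓ ∈ Finset.range m, α ℓ :=
  norm_sum_le' hd h α hunit hα _ (Finset.range_subset_range.mpr hm)

lemma norm_Hpart_sub {d L : ℕ} (hd : 1 ≤ d) (h : ℕ → Matrix (Fin d) (Fin d) ℂ) (α : ℕ → ℝ)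
    (hunit : ∀ ℓ < L, h ℓ ∈ Matrix.unitaryGroup (Fin d) ℂ)
    (hα : ∀ ℓ < L, 0 ≤ α ℓ) {m : ℕ} (hm : m ≤ L) :
    ‖Hpart d h α L - Hpart d h α m‖ ≤
      (∑ ℓ ∈ Finset.range L, α ℓ) - ∑ ℓ ∈ Finset.range m, α ℓ := by
  have hsub : Finset.range m ⊆ Finset.range L := Finset.range_subset_range.mpr hm
  have h1 : Hpart d h α L - Hpart d h α m
      = ∑ ℓ ∈ Finset.range L \ Finset.range m, (α ℓ : ℂ) • h ℓ := by
    rw [Finset.sum_sdiff_eq_sub hsub]; rfl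
  have h2 : (∑ ℓ ∈ Finset.range L, α ℓ) - ∑ ℓ ∈ Finset.range m, α ℓ
      = ∑ ℓ ∈ Finset.range L \ Finset.range m, α ℓ := (Finset.sum_sdiff_eq_sub hsub).symm
  rw [h1, h2]
  exact norm_sum_le' hd h α hunit hα _ (Finset.sdiff_subset)

lemma Lam_nonneg {L : ℕ} {α : ℕ → ℝ} (hα : ∀ ℓ < L, 0 ≤ α ℓ) {m : ℕ} (hm : m ≤ L) :
    0 ≤ ∑ ℓ ∈ Finset.range m, α ℓ :=
  Finset.sum_nonneg fun ℓ hℓ => hα ℓ (lt_of_lt_of_le (Finset.mem_range.mp hℓ) hm)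

lemma Lam_mono {L : ℕ} {α : ℕ → ℝ} (hα : ∀ ℓ < L, 0 ≤ α ℓ) {m : ℕ} (hm : m ≤ L) :
    (∑ ℓ ∈ Finset.range m, α ℓ) ≤ ∑ ℓ ∈ Finset.range L, α ℓ :=
  Finset.sum_le_sum_of_subset_of_nonneg (Finset.range_subset_range.mpr hm)
    (fun ℓ hℓ _ => hα ℓ (Finset.mem_range.mp hℓ))

lemma norm_pow_le_my {d : ℕ} (hd : 1 ≤ d) (A : Matrix (Fin d) (Fin d) ℂ) (k : ℕ) :
    ‖A ^ k‖ ≤ ‖A‖ ^ k := by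
  haveI : Nonempty (Fin d) := ⟨⟨0, hd⟩⟩
  induction k with
  | zero => simp
  | succ k ih =>
    rw [pow_succ, pow_succ]
    exact (norm_mul_le _ _).trans (mul_le_mul_of_nonneg_right ih (norm_nonneg _))

lemma key_prod {d L : ℕ} (hd : 1 ≤ d) (h : ℕ → Matrix (Fin d) (Fin d) ℂ) (α : ℕ → ℝ)
    (hunit : ∀ ℓ < L, h ℓ ∈ Matrix.unitaryGroup (Fin d) ℂ)
    (hα : ∀ ℓ < L, 0 ≤ α ℓ) (Lk : ℕ → ℕ) (hLk : ∀ k, Lk k ≤ L) (k : ℕ) :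
    ‖((List.range k).map (fun j => Hpart d h α (Lk (j + 1)))).prod‖ ≤
        (∏ j ∈ Finset.range k, ∑ ℓ ∈ Finset.range (Lk (j+1)), α ℓ) ∧
    ‖(Hpart d h α L) ^ k - ((List.range k).map (fun j => Hpart d h α (Lk (j + 1)))).prod‖ ≤
        (∑ ℓ ∈ Finset.range L, α ℓ) ^ k
          - ∏ j ∈ Finset.range k, ∑ ℓ ∈ Finset.range (Lk (j+1)), α ℓ := by
  haveI : Nonempty (Fin d) := ⟨⟨0, hd⟩⟩
  induction k with
  | zero => simp
  | succ k ih =>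
    obtain ⟨ih1, ih2⟩ := ih
    have hMsucc : ((List.range (k+1)).map (fun j => Hpart d h α (Lk (j + 1)))).prod
        = ((List.range k).map (fun j => Hpart d h α (Lk (j + 1)))).prod
            * Hpart d h α (Lk (k+1)) := by
      rw [List.range_succ, List.map_append, List.prod_append]; simp
    set M := ((List.range k).map (fun j => Hpart d h α (Lk (j + 1)))).prod with hM
    set B := Hpart d h α (Lk (k+1)) with hB
    set P := ∏ j ∈ Finset.range k, ∑ ℓ ∈ Finset.range (Lk (j+1)), α ℓ with hP
    have hHk : ‖(Hpart d h α L) ^ k‖ ≤ (∑ ℓ ∈ Finset.range L, α ℓ) ^ k := by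
      calc ‖(Hpart d h α L) ^ k‖ ≤ ‖Hpart d h α L‖ ^ k := norm_pow_le_my hd _ k
        _ ≤ (∑ ℓ ∈ Finset.range L, α ℓ) ^ k :=
            pow_le_pow_left₀ (norm_nonneg _) (norm_Hpart hd h α hunit hα le_rfl) k
    have hBn : ‖B‖ ≤ ∑ ℓ ∈ Finset.range (Lk (k+1)), α ℓ :=
      norm_Hpart hd h α hunit hα (hLk (k+1))
    have hPnn : 0 ≤ P := Finset.prod_nonneg fun j _ => Lam_nonneg hα (hLk (j+1))
    have hLmnn : 0 ≤ ∑ ℓ ∈ Finset.range (Lk (k+1)), α ℓ := Lam_nonneg hα (hLk (k+1))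
    have hLmle : (∑ ℓ ∈ Finset.range (Lk (k+1)), α ℓ) ≤ ∑ ℓ ∈ Finset.range L, α ℓ :=
      Lam_mono hα (hLk (k+1))
    constructor
    · rw [hMsucc, Finset.prod_range_succ]
      calc ‖M * B‖ ≤ ‖M‖ * ‖B‖ := norm_mul_le _ _
        _ ≤ P * ∑ ℓ ∈ Finset.range (Lk (k+1)), α ℓ :=
            mul_le_mul ih1 hBn (norm_nonneg _) hPnn
    · rw [hMsucc, Finset.prod_range_succ]
      have hid : (Hpart d h α L) ^ (k+1) - M * B
          = (Hpart d h α L) ^ k * (Hpart d h α L - B) + ((Hpart d h α L) ^ k - M) * B := by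
        noncomm_ring
      rw [hid]
      have hsubB : ‖Hpart d h α L - B‖ ≤
          (∑ ℓ ∈ Finset.range L, α ℓ) - ∑ ℓ ∈ Finset.range (Lk (k+1)), α ℓ :=
        norm_Hpart_sub hd h α hunit hα (hLk (k+1))
      calc ‖(Hpart d h α L) ^ k * (Hpart d h α L - B) + ((Hpart d h α L) ^ k - M) * B‖
          ≤ ‖(Hpart d h α L) ^ k‖ * ‖Hpart d h α L - B‖
            + ‖(Hpart d h α L) ^ k - M‖ * ‖B‖ :=
            (norm_add_le _ _).trans (add_le_add (norm_mul_le _ _) (norm_mul_le _ _))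
        _ ≤ (∑ ℓ ∈ Finset.range L, α ℓ) ^ k
              * ((∑ ℓ ∈ Finset.range L, α ℓ) - ∑ ℓ ∈ Finset.range (Lk (k+1)), α ℓ)
            + ((∑ ℓ ∈ Finset.range L, α ℓ) ^ k - P)
              * ∑ ℓ ∈ Finset.range (Lk (k+1)), α ℓ := by
            have hΛk : (0:ℝ) ≤ (∑ ℓ ∈ Finset.range L, α ℓ) ^ k :=
              pow_nonneg (Lam_nonneg hα (le_refl L)) k
            have hPle : P ≤ (∑ ℓ ∈ Finset.range L, α ℓ) ^ k := by
              rw [hP]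
              calc (∏ j ∈ Finset.range k, ∑ ℓ ∈ Finset.range (Lk (j+1)), α ℓ)
                  ≤ ∏ j ∈ Finset.range k, ∑ ℓ ∈ Finset.range L, α ℓ := by
                    refine Finset.prod_le_prod (fun j _ => Lam_nonneg hα (hLk (j+1)))
                      (fun j _ => Lam_mono hα (hLk (j+1)))
                _ = (∑ ℓ ∈ Finset.range L, α ℓ) ^ k := by
                    rw [Finset.prod_const, Finset.card_range]
            refine add_le_add
              (mul_le_mul hHk hsubB (norm_nonneg _)
                (pow_nonneg (Lam_nonneg hα (le_refl L)) k)) ?_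
            refine mul_le_mul ih2 hBn (norm_nonneg _) (by linarith)
        _ = (∑ ℓ ∈ Finset.range L, α ℓ) ^ (k+1)
              - P * ∑ ℓ ∈ Finset.range (Lk (k+1)), α ℓ := by ring

lemma series_facts {d L : ℕ} (hd : 1 ≤ d) (h : ℕ → Matrix (Fin d) (Fin d) ℂ) (α : ℕ → ℝ)
    (hunit : ∀ ℓ < L, h ℓ ∈ Matrix.unitaryGroup (Fin d) ℂ)
    (hα : ∀ ℓ < L, 0 ≤ α ℓ) (Lk : ℕ → ℕ) (hLk : ∀ k, Lk k ≤ L)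
    (hΛ : 0 < ∑ ℓ ∈ Finset.range L, α ℓ) :
    strunc α Lk (Real.log 2 / ∑ ℓ ∈ Finset.range L, α ℓ) ≤ 2 ∧
    ‖exp (((-(Real.log 2 / ∑ ℓ ∈ Finset.range L, α ℓ : ℝ) : ℂ) * Complex.I) • Hpart d h α L)
        - Utrunc d h α Lk (Real.log 2 / ∑ ℓ ∈ Finset.range L, α ℓ)‖
      ≤ 2 - strunc α Lk (Real.log 2 / ∑ ℓ ∈ Finset.range L, α ℓ) := by
  haveI : Nonempty (Fin d) := ⟨⟨0, hd⟩⟩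
  set Λ : ℝ := ∑ ℓ ∈ Finset.range L, α ℓ with hΛdef
  set t : ℝ := Real.log 2 / Λ with ht
  have htpos : 0 ≤ t := div_nonneg (Real.log_nonneg one_le_two) hΛ.le
  set H := Hpart d h α L with hH
  set Pk : ℕ → ℝ := fun k => ∏ j ∈ Finset.range k, ∑ ℓ ∈ Finset.range (Lk (j+1)), α ℓ with hPk
  set Mk : ℕ → Matrix (Fin d) (Fin d) ℂ :=
    fun k => ((List.range k).map (fun j => Hpart d h α (Lk (j + 1)))).prod with hMk
  set a : ℕ → ℝ := fun k => t ^ k / (Nat.factorial k : ℝ) * Pk k with ha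
  set b : ℕ → ℝ := fun k => (t * Λ) ^ k / (Nat.factorial k : ℝ) with hb
  have hPknn : ∀ k, 0 ≤ Pk k := fun k =>
    Finset.prod_nonneg fun j _ => Lam_nonneg hα (hLk (j+1))
  have hPkle : ∀ k, Pk k ≤ Λ ^ k := by
    intro k
    calc Pk k ≤ ∏ j ∈ Finset.range k, Λ :=
          Finset.prod_le_prod (fun j _ => Lam_nonneg hα (hLk (j+1)))
            (fun j _ => Lam_mono hα (hLk (j+1)))
      _ = Λ ^ k := by rw [Finset.prod_const, Finset.card_range]
  have hann : ∀ k, 0 ≤ a k := fun k =>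
    mul_nonneg (div_nonneg (pow_nonneg htpos k) (Nat.cast_nonneg _)) (hPknn k)
  have hab : ∀ k, a k ≤ b k := by
    intro k
    have hbk : b k = t ^ k / (Nat.factorial k : ℝ) * Λ ^ k := by
      rw [hb]; simp only [mul_pow]; ring
    rw [hbk]
    exact mul_le_mul_of_nonneg_left (hPkle k) (by positivity)
  have hbsumm : Summable b := Real.summable_pow_div_factorial (t * Λ)
  have hasumm : Summable a := hbsumm.of_nonneg_of_le hann hab
  have hbsum : ∑' k, b k = 2 := by
    rw [hb]
    have : ∑' k : ℕ, (t*Λ) ^ k / (Nat.factorial k : ℝ) = Real.exp (t*Λ) := by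
      rw [Real.exp_eq_exp_ℝ, exp_eq_tsum_div]
    rw [this, ht, div_mul_cancel₀ _ (ne_of_gt hΛ), Real.exp_log two_pos]
  have hstr : strunc α Lk t = ∑' k, a k := rfl
  have hsle2 : strunc α Lk t ≤ 2 := by
    rw [hstr, ← hbsum]; exact Summable.tsum_le_tsum hab hasumm hbsumm
  refine ⟨hsle2, ?_⟩
  set c : ℕ → ℂ := fun k => (-(t:ℂ) * Complex.I) ^ k / (Nat.factorial k : ℂ) with hc
  have hcnorm : ∀ k, ‖c k‖ = t ^ k / (Nat.factorial k : ℝ) := by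
    intro k
    rw [hc]
    simp only [norm_div, norm_pow, norm_mul, norm_neg, Complex.norm_real, Complex.norm_I,
      Complex.norm_natCast]
    rw [Real.norm_of_nonneg htpos, mul_one]
  set f : ℕ → Matrix (Fin d) (Fin d) ℂ := fun k => c k • H ^ k with hf
  set g : ℕ → Matrix (Fin d) (Fin d) ℂ := fun k => c k • Mk k with hg
  have hMknorm : ∀ k, ‖Mk k‖ ≤ Pk k := fun k =>
    (key_prod hd h α hunit hα Lk hLk k).1
  have hHnorm : ‖H‖ ≤ Λ := norm_Hpart hd h α hunit hα (le_refl L)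
  have hfnorm : ∀ k, ‖f k‖ ≤ b k := by
    intro k
    rw [hf]
    simp only [norm_smul, hcnorm]
    calc t ^ k / (Nat.factorial k : ℝ) * ‖H ^ k‖
        ≤ t ^ k / (Nat.factorial k : ℝ) * Λ ^ k := by
          refine mul_le_mul_of_nonneg_left ?_ (by positivity)
          exact (norm_pow_le_my hd H k).trans
            (pow_le_pow_left₀ (norm_nonneg _) hHnorm k)
      _ = b k := by rw [hb]; simp [mul_pow]; ring
  have hgnorm : ∀ k, ‖g k‖ ≤ a k := by
    intro k
    rw [hg]
    simp only [norm_smul, hcnorm]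
    exact mul_le_mul_of_nonneg_left (hMknorm k) (by positivity)
  have hfgnorm : ∀ k, ‖f k - g k‖ ≤ b k - a k := by
    intro k
    have : f k - g k = c k • (H ^ k - Mk k) := by rw [hf, hg]; simp [smul_sub]
    rw [this, norm_smul, hcnorm]
    have h2 := (key_prod hd h α hunit hα Lk hLk k).2
    calc t ^ k / (Nat.factorial k : ℝ) * ‖H ^ k - Mk k‖
        ≤ t ^ k / (Nat.factorial k : ℝ) * (Λ ^ k - Pk k) :=
          mul_le_mul_of_nonneg_left h2 (by positivity)
      _ = b k - a k := by rw [ha, hb]; simp [mul_pow]; ring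
  have hfsumm : Summable f := Summable.of_norm_bounded hbsumm hfnorm
  have hgsumm : Summable g := Summable.of_norm_bounded hasumm hgnorm
  have hV : exp (((-(t : ℝ) : ℂ) * Complex.I) • H) = ∑' k, f k := by
    rw [exp_eq_tsum ℂ]
    refine tsum_congr fun k => ?_
    simp only [hf, hc]
    rw [smul_pow, smul_smul]
    congr 1
    rw [div_eq_mul_inv, mul_comm]
  have hU : Utrunc d h α Lk t = ∑' k, g k := by
    rw [Summable.tsum_eq_zero_add hgsumm]
    have hg0 : g 0 = 1 := by rw [hg]; simp [hMk, hc]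
    rw [hg0, Utrunc]
  rw [hV, hU, ← Summable.tsum_sub hfsumm hgsumm]
  calc ‖∑' k, (f k - g k)‖ ≤ ∑' k, ‖f k - g k‖ :=
        norm_tsum_le_tsum_norm ((hbsumm.sub hasumm).of_nonneg_of_le
          (fun k => norm_nonneg _) hfgnorm)
    _ ≤ ∑' k, (b k - a k) := Summable.tsum_le_tsum hfgnorm
        ((hbsumm.sub hasumm).of_nonneg_of_le (fun k => norm_nonneg _) hfgnorm)
        (hbsumm.sub hasumm)
    _ = 2 - strunc α Lk t := by rw [Summable.tsum_sub hbsumm hasumm, hbsum, hstr]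

lemma V_unitary {d : ℕ} (hd : 1 ≤ d) {H : Matrix (Fin d) (Fin d) ℂ} (hH : H.IsHermitian)
    (t : ℝ) :
    (exp ((-(t:ℂ) * Complex.I) • H))ᴴ * exp ((-(t:ℂ) * Complex.I) • H) = 1 ∧
    exp ((-(t:ℂ) * Complex.I) • H) * (exp ((-(t:ℂ) * Complex.I) • H))ᴴ = 1 ∧
    ‖exp ((-(t:ℂ) * Complex.I) • H)‖ = 1 := by
  haveI : Nonempty (Fin d) := ⟨⟨0, hd⟩⟩
  have hconj : (exp ((-(t:ℂ) * Complex.I) • H))ᴴ = exp (((t:ℂ) * Complex.I) • H) := by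
    rw [← Matrix.exp_conjTranspose]
    congr 1
    rw [conjTranspose_smul, hH.eq]
    congr 1
    simp [Complex.ext_iff]
  have hcomm : Commute (((t:ℂ) * Complex.I) • H) ((-(t:ℂ) * Complex.I) • H) :=
    ((Commute.refl H).smul_left _).smul_right _
  have h1 : exp (((t:ℂ) * Complex.I) • H) * exp ((-(t:ℂ) * Complex.I) • H) = 1 := by
    rw [← Matrix.exp_add_of_commute _ _ hcomm]
    have : ((t:ℂ) * Complex.I) • H + (-(t:ℂ) * Complex.I) • H = 0 := by
      rw [← add_smul]; ring_nf; simp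
    rw [this, exp_zero]
  have h2 : exp ((-(t:ℂ) * Complex.I) • H) * exp (((t:ℂ) * Complex.I) • H) = 1 := by
    rw [← Matrix.exp_add_of_commute _ _ hcomm.symm]
    have : (-(t:ℂ) * Complex.I) • H + ((t:ℂ) * Complex.I) • H = 0 := by
      rw [← add_smul]; ring_nf; simp
    rw [this, exp_zero]
  refine ⟨by rw [hconj]; exact h1, by rw [hconj]; exact h2, ?_⟩
  have hcs := Matrix.l2_opNorm_conjTranspose_mul_self (exp ((-(t:ℂ) * Complex.I) • H))
  rw [hconj, h1, norm_one] at hcs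
  nlinarith [norm_nonneg (exp ((-(t:ℂ) * Complex.I) • H))]

lemma expand_TTT {d : ℕ} (F : Matrix (Fin d) (Fin d) ℂ) :
    (1 + F) * (1 + F)ᴴ * (1 + F)
      = 1 + (F + F) + Fᴴ + (F * F + F * Fᴴ + Fᴴ * F + F * Fᴴ * F) := by
  simp only [conjTranspose_add, conjTranspose_one, mul_add, add_mul, mul_one, one_mul]
  noncomm_ring

lemma expand_P {d : ℕ} (c3 c4 : ℂ) (F : Matrix (Fin d) (Fin d) ℂ) :
    c3 • (1 + F) - c4 • ((1 + F) * (1 + F)ᴴ * (1 + F)) - 1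
      = (c3 - c4 - 1) • (1 : Matrix (Fin d) (Fin d) ℂ) + (c3 - 2 * c4) • F
        + (-c4) • Fᴴ + (-c4) • (F * F + F * Fᴴ + Fᴴ * F + F * Fᴴ * F) := by
  rw [expand_TTT]
  module

lemma scalar_ineq (e : ℝ) (h0 : 0 ≤ e) (h1 : e ≤ 1/2) :
    |3/(2-e) - 4/(2-e)^3 - 1| + |3/(2-e) - 8/(2-e)^3| * e + (4/(2-e)^3) * e
      + (4/(2-e)^3) * (3*e^2 + e^3) ≤ e + 8*e^2 := by
  have hs : (0:ℝ) < 2 - e := by linarith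
  have hD : (0:ℝ) < (2-e)^3 := by positivity
  have hA : |3/(2-e) - 4/(2-e)^3 - 1| = (e^2*(3-e))/(2-e)^3 := by
    have hval : 3/(2-e) - 4/(2-e)^3 - 1 = -((e^2*(3-e))/(2-e)^3) := by
      field_simp; ring
    rw [hval, abs_neg, abs_of_nonneg (div_nonneg (by nlinarith) hD.le)]
  rw [hA]
  rcases le_total 8 (3*(2-e)^2) with hc | hc
  · have hB : |3/(2-e) - 8/(2-e)^3| = (3*(2-e)^2 - 8)/(2-e)^3 := by
      have hval : 3/(2-e) - 8/(2-e)^3 = (3*(2-e)^2 - 8)/(2-e)^3 := by field_simp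
      rw [hval, abs_of_nonneg (div_nonneg (by linarith) hD.le)]
    rw [hB]
    have heq : (e^2*(3-e))/(2-e)^3 + (3*(2-e)^2 - 8)/(2-e)^3 * e + (4/(2-e)^3) * e
        + (4/(2-e)^3) * (3*e^2 + e^3)
        = (e^2*(3-e) + (3*(2-e)^2 - 8)*e + 4*e + 4*(3*e^2 + e^3))/(2-e)^3 := by ring
    rw [heq, div_le_iff₀ hD]
    nlinarith [mul_nonneg h0 h0, mul_nonneg (mul_nonneg h0 h0) h0, sq_nonneg (1-2*e),
      mul_nonneg (mul_nonneg h0 h0) (mul_nonneg h0 h0)]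
  · have hB : |3/(2-e) - 8/(2-e)^3| = (8 - 3*(2-e)^2)/(2-e)^3 := by
      have hval : 3/(2-e) - 8/(2-e)^3 = -((8 - 3*(2-e)^2)/(2-e)^3) := by field_simp; ring
      rw [hval, abs_neg, abs_of_nonneg (div_nonneg (by linarith) hD.le)]
    rw [hB]
    have heq : (e^2*(3-e))/(2-e)^3 + (8 - 3*(2-e)^2)/(2-e)^3 * e + (4/(2-e)^3) * e
        + (4/(2-e)^3) * (3*e^2 + e^3)
        = (e^2*(3-e) + (8 - 3*(2-e)^2)*e + 4*e + 4*(3*e^2 + e^3))/(2-e)^3 := by ring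
    rw [heq, div_le_iff₀ hD]
    nlinarith [mul_nonneg h0 h0, mul_nonneg (mul_nonneg h0 h0) h0, sq_nonneg (1-2*e),
      mul_nonneg (mul_nonneg h0 h0) (mul_nonneg h0 h0), sq_nonneg e, sq_nonneg (e-1/2)]

lemma norm_add4 {d : ℕ} (a b c e : Matrix (Fin d) (Fin d) ℂ) :
    ‖a + b + c + e‖ ≤ ‖a‖ + ‖b‖ + ‖c‖ + ‖e‖ :=
  calc ‖a + b + c + e‖ ≤ ‖a + b + c‖ + ‖e‖ := norm_add_le _ _
    _ ≤ (‖a + b‖ + ‖c‖) + ‖e‖ := by gcongr; exact norm_add_le _ _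
    _ ≤ ((‖a‖ + ‖b‖) + ‖c‖) + ‖e‖ := by gcongr; exact norm_add_le _ _

lemma one_step {d : ℕ} (hd : 1 ≤ d) (U V : Matrix (Fin d) (Fin d) ℂ) (e : ℝ)
    (h0 : 0 ≤ e) (h1 : e ≤ 1/2)
    (hV1 : Vᴴ * V = 1) (hV2 : V * Vᴴ = 1) (hVn : ‖V‖ = 1) (hUV : ‖U - V‖ ≤ e) :
    ‖(((3 / (2-e) : ℝ) : ℂ) • U - ((4 / (2-e) ^ 3 : ℝ) : ℂ) • (U * Uᴴ * U)) - V‖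
      ≤ e + 8 * e^2 := by
  haveI : Nonempty (Fin d) := ⟨⟨0, hd⟩⟩
  set s : ℝ := 2 - e with hs
  have hspos : (0:ℝ) < s := by rw [hs]; linarith
  set c3 : ℂ := ((3 / s : ℝ) : ℂ) with hc3
  set c4 : ℂ := ((4 / s ^ 3 : ℝ) : ℂ) with hc4
  set T : Matrix (Fin d) (Fin d) ℂ := Vᴴ * U with hT
  set F : Matrix (Fin d) (Fin d) ℂ := T - 1 with hF
  have hTF : T = 1 + F := by rw [hF]; abel
  have hFnorm : ‖F‖ ≤ e := by
    have : F = Vᴴ * (U - V) := by rw [hF, hT, mul_sub, hV1]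
    rw [this]
    calc ‖Vᴴ * (U - V)‖ ≤ ‖Vᴴ‖ * ‖U - V‖ := norm_mul_le _ _
      _ ≤ 1 * e := by
          rw [Matrix.l2_opNorm_conjTranspose, hVn]
          exact mul_le_mul_of_nonneg_left hUV zero_le_one
      _ = e := one_mul e
  have cancel : ∀ X : Matrix (Fin d) (Fin d) ℂ, V * (Vᴴ * X) = X := fun X => by
    rw [← Matrix.mul_assoc, hV2, one_mul]
  have hVT : V * T = U := cancel U
  have hTc : Tᴴ = Uᴴ * V := by rw [hT, conjTranspose_mul, conjTranspose_conjTranspose]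
  have hVTTT : V * (T * Tᴴ * T) = U * Uᴴ * U := by
    rw [hTc, hT]
    simp only [Matrix.mul_assoc]
    rw [cancel, cancel]
  have hfact : (c3 • U - c4 • (U * Uᴴ * U)) - V
      = V * (c3 • T - c4 • (T * Tᴴ * T) - 1) := by
    rw [mul_sub, mul_sub, mul_one, Matrix.mul_smul, Matrix.mul_smul, hVT, hVTTT]
  rw [hfact]
  have hnorm1 : ‖V * (c3 • T - c4 • (T * Tᴴ * T) - 1)‖
      ≤ ‖c3 • T - c4 • (T * Tᴴ * T) - 1‖ := by
    calc ‖V * (c3 • T - c4 • (T * Tᴴ * T) - 1)‖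
        ≤ ‖V‖ * ‖c3 • T - c4 • (T * Tᴴ * T) - 1‖ := norm_mul_le _ _
      _ = _ := by rw [hVn, one_mul]
  refine hnorm1.trans ?_
  rw [hTF, expand_P]
  have hFc : ‖Fᴴ‖ = ‖F‖ := Matrix.l2_opNorm_conjTranspose F
  have hFF : ‖F * F‖ ≤ e^2 := by
    calc ‖F * F‖ ≤ ‖F‖ * ‖F‖ := norm_mul_le _ _
      _ ≤ e * e := mul_le_mul hFnorm hFnorm (norm_nonneg _) h0
      _ = e^2 := (sq e).symm
  have hFFc : ‖F * Fᴴ‖ ≤ e^2 := by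
    calc ‖F * Fᴴ‖ ≤ ‖F‖ * ‖Fᴴ‖ := norm_mul_le _ _
      _ ≤ e * e := by rw [hFc]; exact mul_le_mul hFnorm hFnorm (norm_nonneg _) h0
      _ = e^2 := (sq e).symm
  have hFcF : ‖Fᴴ * F‖ ≤ e^2 := by
    calc ‖Fᴴ * F‖ ≤ ‖Fᴴ‖ * ‖F‖ := norm_mul_le _ _
      _ ≤ e * e := by rw [hFc]; exact mul_le_mul hFnorm hFnorm (norm_nonneg _) h0
      _ = e^2 := (sq e).symm
  have hFFF : ‖F * Fᴴ * F‖ ≤ e^3 := by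
    calc ‖F * Fᴴ * F‖ ≤ ‖F * Fᴴ‖ * ‖F‖ := norm_mul_le _ _
      _ ≤ e^2 * e := mul_le_mul hFFc hFnorm (norm_nonneg _) (by positivity)
      _ = e^3 := by ring
  have hc31 : ‖c3 - c4 - 1‖ = |3/s - 4/s^3 - 1| := by
    rw [hc3, hc4]
    rw [show ((3 / s : ℝ) : ℂ) - ((4 / s ^ 3 : ℝ) : ℂ) - 1 = ((3/s - 4/s^3 - 1 : ℝ) : ℂ) by
      push_cast; ring]
    rw [Complex.norm_real]; exact Real.norm_eq_abs _
  have hc32 : ‖c3 - 2 * c4‖ = |3/s - 8/s^3| := by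
    rw [hc3, hc4]
    rw [show ((3 / s : ℝ) : ℂ) - 2 * ((4 / s ^ 3 : ℝ) : ℂ) = ((3/s - 8/s^3 : ℝ) : ℂ) by
      push_cast; ring]
    rw [Complex.norm_real]; exact Real.norm_eq_abs _
  have hc4n : ‖-c4‖ = 4/s^3 := by
    rw [hc4, norm_neg, Complex.norm_real, Real.norm_eq_abs, abs_of_nonneg (by positivity)]
  have hone : ‖(1 : Matrix (Fin d) (Fin d) ℂ)‖ = 1 := norm_one
  calc ‖(c3 - c4 - 1) • (1 : Matrix (Fin d) (Fin d) ℂ) + (c3 - 2 * c4) • F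
        + (-c4) • Fᴴ + (-c4) • (F * F + F * Fᴴ + Fᴴ * F + F * Fᴴ * F)‖
      ≤ ‖(c3 - c4 - 1) • (1 : Matrix (Fin d) (Fin d) ℂ)‖ + ‖(c3 - 2 * c4) • F‖
        + ‖(-c4) • Fᴴ‖ + ‖(-c4) • (F * F + F * Fᴴ + Fᴴ * F + F * Fᴴ * F)‖ := by
        exact norm_add4 _ _ _ _
    _ ≤ |3/s - 4/s^3 - 1| + |3/s - 8/s^3| * e + (4/s^3) * e + (4/s^3) * (3*e^2 + e^3) := by
        rw [norm_smul, norm_smul, norm_smul, norm_smul, hc31, hc32, hc4n, hone, mul_one, hFc]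
        refine add_le_add (add_le_add (add_le_add le_rfl ?_) ?_) ?_
        · exact mul_le_mul_of_nonneg_left hFnorm (abs_nonneg _)
        · exact mul_le_mul_of_nonneg_left hFnorm (by positivity)
        · refine mul_le_mul_of_nonneg_left ?_ (by positivity)
          calc ‖F * F + F * Fᴴ + Fᴴ * F + F * Fᴴ * F‖
              ≤ ‖F * F‖ + ‖F * Fᴴ‖ + ‖Fᴴ * F‖ + ‖F * Fᴴ * F‖ := norm_add4 _ _ _ _
            _ ≤ e^2 + e^2 + e^2 + e^3 := by
                exact add_le_add (add_le_add (add_le_add hFF hFFc) hFcF) hFFF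
            _ = 3*e^2 + e^3 := by ring
    _ ≤ e + 8 * e^2 := by rw [hs]; exact scalar_ineq e h0 h1

lemma telescope {d : ℕ} (hd : 1 ≤ d) (V A : Matrix (Fin d) (Fin d) ℂ) (δ : ℝ) (hδ : 0 ≤ δ)
    (hV : ‖V‖ ≤ 1) (hVA : ‖V - A‖ ≤ δ) (hA : ‖A‖ ≤ 1 + δ) (n : ℕ) :
    ‖V ^ (n+1) - A ^ (n+1)‖ ≤ (n+1 : ℝ) * δ * (1+δ) ^ n := by
  haveI : Nonempty (Fin d) := ⟨⟨0, hd⟩⟩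
  have hApow : ∀ k : ℕ, ‖A ^ k‖ ≤ (1+δ) ^ k := by
    intro k
    induction k with
    | zero => simp
    | succ k ih =>
      rw [pow_succ, pow_succ]
      calc ‖A ^ k * A‖ ≤ ‖A ^ k‖ * ‖A‖ := norm_mul_le _ _
        _ ≤ (1+δ)^k * (1+δ) := mul_le_mul ih hA (norm_nonneg _) (by positivity)
  induction n with
  | zero => simpa using hVA
  | succ n ih =>
    have hid : V ^ (n+2) - A ^ (n+2) = V * (V ^ (n+1) - A ^ (n+1)) + (V - A) * A ^ (n+1) := by
      rw [pow_succ' V (n+1), pow_succ' A (n+1)]; noncomm_ring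
    rw [hid]
    push_cast
    have h1δ : (1:ℝ) ≤ 1 + δ := by linarith
    calc ‖V * (V ^ (n+1) - A ^ (n+1)) + (V - A) * A ^ (n+1)‖
        ≤ ‖V‖ * ‖V ^ (n+1) - A ^ (n+1)‖ + ‖V - A‖ * ‖A ^ (n+1)‖ :=
          (norm_add_le _ _).trans (add_le_add (norm_mul_le _ _) (norm_mul_le _ _))
      _ ≤ 1 * ((n+1 : ℝ) * δ * (1+δ) ^ n) + δ * (1+δ)^(n+1) := by
          refine add_le_add (mul_le_mul hV ih (norm_nonneg _) zero_le_one)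
            (mul_le_mul hVA (hApow (n+1)) (norm_nonneg _) hδ)
      _ ≤ (n+1+1 : ℝ) * δ * (1+δ) ^ (n+1) := by
          rw [one_mul]
          have hpow : ((n:ℝ)+1) * δ * (1+δ)^n ≤ ((n:ℝ)+1) * δ * (1+δ)^(n+1) := by
            refine mul_le_mul_of_nonneg_left ?_ (by positivity)
            exact pow_le_pow_right₀ h1δ (Nat.le_succ n)
          nlinarith [pow_nonneg (by linarith : (0:ℝ) ≤ 1+δ) (n+1)]

end TTEaux

/-- **Total simulation error of the amplified generalized truncated Taylor method.**
If `H` is Hermitian, `Λ > 0`, `t_∞ = log 2 / Λ`, `s = s_{\vec L}(t_∞)`, `ε = 2 − s ≤ 1/2`,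
then for every number of steps `r`,
`‖exp(−i r t_∞ H) − Ã^r‖ ≤ r (ε + 8ε²) (1 + ε + 8ε²)^{r−1}`. -/
theorem total_simulation_error (d L : ℕ) (hd : 1 ≤ d) (hL : 1 ≤ L)
    (h : ℕ → Matrix (Fin d) (Fin d) ℂ) (α : ℕ → ℝ)
    (hunit : ∀ ℓ < L, h ℓ ∈ Matrix.unitaryGroup (Fin d) ℂ)
    (hα : ∀ ℓ < L, 0 ≤ α ℓ)
    (Lk : ℕ → ℕ) (hLk : ∀ k, Lk k ≤ L)
    (hH : (Hpart d h α L).IsHermitian)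
    (hΛ : 0 < ∑ ℓ ∈ Finset.range L, α ℓ)
    (hε : 2 - strunc α Lk (Real.log 2 / ∑ ℓ ∈ Finset.range L, α ℓ) ≤ 1 / 2) :
    ∀ r : ℕ,
      ‖NormedSpace.exp
          ((-((r : ℝ) * (Real.log 2 / ∑ ℓ ∈ Finset.range L, α ℓ)) * Complex.I) •
            Hpart d h α L) -
        (Atilde d h α Lk (Real.log 2 / ∑ ℓ ∈ Finset.range L, α ℓ)
            (strunc α Lk (Real.log 2 / ∑ ℓ ∈ Finset.range L, α ℓ))) ^ r‖ ≤
      (r : ℝ) *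
        ((2 - strunc α Lk (Real.log 2 / ∑ ℓ ∈ Finset.range L, α ℓ)) +
          8 * (2 - strunc α Lk (Real.log 2 / ∑ ℓ ∈ Finset.range L, α ℓ)) ^ 2) *
        (1 + (2 - strunc α Lk (Real.log 2 / ∑ ℓ ∈ Finset.range L, α ℓ)) +
          8 * (2 - strunc α Lk (Real.log 2 / ∑ ℓ ∈ Finset.range L, α ℓ)) ^ 2) ^ (r - 1) := by
  haveI : Nonempty (Fin d) := ⟨⟨0, hd⟩⟩
  obtain ⟨hs2, hVU⟩ := TTEaux.series_facts hd h α hunit hα Lk hLk hΛ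
  set t : ℝ := Real.log 2 / ∑ ℓ ∈ Finset.range L, α ℓ with ht
  set s : ℝ := strunc α Lk t with hsdef
  set H := Hpart d h α L with hHdef
  set U := Utrunc d h α Lk t with hUdef
  set V := NormedSpace.exp ((-(t:ℂ) * Complex.I) • H) with hVdef
  set e : ℝ := 2 - s with hedef
  obtain ⟨hV1, hV2, hVn⟩ := TTEaux.V_unitary hd hH t
  have he0 : 0 ≤ e := by rw [hedef]; linarith
  have he1 : e ≤ 1/2 := hε
  have hUVe : ‖U - V‖ ≤ e := by
    rw [← norm_sub_rev]
    exact hVU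
  have h2es : (2:ℝ) - e = s := by rw [hedef]; ring
  have honestep := TTEaux.one_step hd U V e he0 he1 hV1 hV2 hVn hUVe
  rw [h2es] at honestep
  have hAt : Atilde d h α Lk t s
      = ((3 / s : ℝ) : ℂ) • U - ((4 / s ^ 3 : ℝ) : ℂ) • (U * Uᴴ * U) := rfl
  set δ : ℝ := e + 8 * e^2 with hδdef
  have hδ0 : 0 ≤ δ := by positivity
  have hVA : ‖V - Atilde d h α Lk t s‖ ≤ δ := by
    rw [norm_sub_rev, hAt]
    exact honestep
  have hAn : ‖Atilde d h α Lk t s‖ ≤ 1 + δ := by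
    calc ‖Atilde d h α Lk t s‖ = ‖V - (V - Atilde d h α Lk t s)‖ := by
          congr 1; abel
      _ ≤ ‖V‖ + ‖V - Atilde d h α Lk t s‖ := norm_sub_le _ _
      _ ≤ 1 + δ := add_le_add (le_of_eq hVn) hVA
  have hscal : ∀ n : ℕ,
      ((-(((n : ℝ) : ℂ) * ((Real.log 2 : ℂ) / ((∑ ℓ ∈ Finset.range L, α ℓ : ℝ) : ℂ)))
          * Complex.I) • H : Matrix (Fin d) (Fin d) ℂ)
      = n • ((-(t:ℂ) * Complex.I) • H) := by
    intro n
    rw [← Nat.cast_smul_eq_nsmul ℂ, smul_smul]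
    congr 1
    rw [ht]
    push_cast
    ring
  intro r
  match r with
  | 0 =>
    rw [hscal 0]
    simp
  | (n+1) =>
    rw [hscal (n+1), Matrix.exp_nsmul, ← hVdef]
    have hexp : (n + 1) - 1 = n := by omega
    rw [hexp]
    have hrw : (1 : ℝ) + e + 8 * e^2 = 1 + δ := by rw [hδdef]; ring
    have := TTEaux.telescope hd V (Atilde d h α Lk t s) δ hδ0 (le_of_eq hVn) hVA hAn n
    calc ‖V ^ (n+1) - (Atilde d h α Lk t s) ^ (n+1)‖
        ≤ ((n:ℝ)+1) * δ * (1+δ) ^ n := this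
      _ = ((n+1 : ℕ) : ℝ) * (e + 8 * e^2) * (1 + e + 8 * e^2) ^ n := by
          rw [hrw, hδdef]; push_cast; ring
end

section
/- With ε_n := Σ_{k=n+1}^{∞} (log 2)^k / k!, for all sufficiently large n one has n < log(1/ε_n) and n · log(log(1/ε_n)) ≤ 2 · log(1/ε_n); that is, the expansion order needed to reach single-step error bound ε scales as O( log(1/ε) / log log(1/ε) ). -/
/-- The single-step error bound at full expansion order `n`,
`ε_n = Σ_{k=n+1}^∞ (log 2)^k / k!`. -/
noncomputable def epsFull (n : ℕ) : ℝ :=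
  ∑' k : ℕ, (Real.log 2) ^ (n + 1 + k) / (Nat.factorial (n + 1 + k) : ℝ)

/-- Lower bound `m (log m − 1) ≤ log m!`. -/
lemma log_factorial_ge (m : ℕ) : (m : ℝ) * (Real.log m - 1) ≤ Real.log (m.factorial : ℝ) := by
  induction m with
  | zero => simp
  | succ m ih =>
    have hfac : ((m + 1).factorial : ℝ) = ((m : ℝ) + 1) * (m.factorial : ℝ) := by
      rw [Nat.factorial_succ]; push_cast; ring
    have hfpos : (0 : ℝ) < (m.factorial : ℝ) := by exact_mod_cast m.factorial_pos
    have h1 : Real.log ((m + 1).factorial : ℝ)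
        = Real.log ((m : ℝ) + 1) + Real.log (m.factorial : ℝ) := by
      rw [hfac, Real.log_mul (by positivity) (ne_of_gt hfpos)]
    rcases Nat.eq_zero_or_pos m with hm | hm
    · subst hm; simp
    · have hm' : (0 : ℝ) < m := by exact_mod_cast hm
      have hlog : Real.log ((m : ℝ) + 1) - Real.log m ≤ 1 / m := by
        rw [← Real.log_div (by positivity) (ne_of_gt hm')]
        calc Real.log (((m : ℝ) + 1) / m) ≤ ((m : ℝ) + 1) / m - 1 :=
              Real.log_le_sub_one_of_pos (by positivity)
          _ = 1 / m := by field_simp; ring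
      have h2 : (m : ℝ) * (Real.log ((m : ℝ) + 1) - Real.log m) ≤ 1 := by
        calc (m : ℝ) * (Real.log ((m : ℝ) + 1) - Real.log m) ≤ (m : ℝ) * (1 / m) :=
              mul_le_mul_of_nonneg_left hlog hm'.le
          _ = 1 := by field_simp
      push_cast
      push_cast at ih
      rw [h1]
      nlinarith [ih]

/-- `log u ≤ 2√u − 2` for `u > 0`. -/
lemma log_le_two_sqrt (u : ℝ) (hu : 0 < u) : Real.log u ≤ 2 * Real.sqrt u - 2 := by
  have hs0 : 0 < Real.sqrt u := Real.sqrt_pos.mpr hu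
  have h2 : Real.log (Real.sqrt u) = Real.log u / 2 := Real.log_sqrt hu.le
  nlinarith [Real.log_le_sub_one_of_pos hs0]

set_option maxRecDepth 8000 in
/-- **Order scaling `n = O(log(1/ε)/log log(1/ε))`.** For all sufficiently large `n`,
`n < log(1/ε_n)` and `n · log(log(1/ε_n)) ≤ 2 · log(1/ε_n)`. -/
theorem order_vs_log_inv_eps :
    ∃ N : ℕ, ∀ n : ℕ, N ≤ n →
      (n : ℝ) < Real.log (1 / epsFull n) ∧
        (n : ℝ) * Real.log (Real.log (1 / epsFull n)) ≤ 2 * Real.log (1 / epsFull n) := by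
  refine ⟨151, fun n hn => ?_⟩
  set x := Real.log 2 with hxdef
  have hx0 : 0 < x := Real.log_pos one_lt_two
  have hxl : x < 0.6931471808 := Real.log_two_lt_d9
  have hxg : (0.6931471803 : ℝ) < x := Real.log_two_gt_d9
  have hx1 : x < 1 := by linarith
  set m := n + 1 with hmdef
  have hm152 : (152 : ℕ) ≤ m := by omega
  have hmR : (152 : ℝ) ≤ (m : ℝ) := by exact_mod_cast hm152
  have hmpos : (0 : ℝ) < (m : ℝ) := by linarith
  have hfpos : (0 : ℝ) < (m.factorial : ℝ) := by exact_mod_cast m.factorial_pos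
  set b := x ^ m / (m.factorial : ℝ) with hbdef
  have hb0 : 0 < b := by positivity
  -- summability of the tail
  have hsum : Summable (fun k : ℕ => x ^ (m + k) / (((m + k).factorial : ℕ) : ℝ)) := by
    have := (Real.summable_pow_div_factorial x).comp_injective (add_right_injective m)
    exact this
  have hepsdef : epsFull n = ∑' k : ℕ, x ^ (m + k) / (((m + k).factorial : ℕ) : ℝ) := rfl
  -- lower bound: first term
  have hlow : b ≤ epsFull n := by
    rw [hepsdef]
    have := Summable.le_tsum hsum 0 (fun j _ => by positivity)
    simpa using this
  have heps0 : 0 < epsFull n := lt_of_lt_of_le hb0 hlow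
  -- upper bound: geometric comparison
  have hup : epsFull n ≤ 4 * b := by
    have hgsum : Summable (fun k : ℕ => b * x ^ k) :=
      (summable_geometric_of_lt_one hx0.le hx1).mul_left b
    have hterm : ∀ k : ℕ, x ^ (m + k) / (((m + k).factorial : ℕ) : ℝ) ≤ b * x ^ k := by
      intro k
      have hfle : (m.factorial : ℝ) ≤ ((m + k).factorial : ℝ) := by
        exact_mod_cast Nat.factorial_le (Nat.le_add_right m k)
      rw [hbdef, pow_add, div_mul_eq_mul_div]
      gcongr
    have h1 : epsFull n ≤ ∑' k : ℕ, b * x ^ k := by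
      rw [hepsdef]; exact Summable.tsum_le_tsum hterm hsum hgsum
    have h2 : ∑' k : ℕ, b * x ^ k = b * (1 - x)⁻¹ := by
      rw [tsum_mul_left, tsum_geometric_of_lt_one hx0.le hx1]
    have h3 : (1 - x)⁻¹ ≤ 4 := by
      rw [inv_le_comm₀ (by linarith) (by norm_num)]
      linarith
    calc epsFull n ≤ b * (1 - x)⁻¹ := h1.trans (le_of_eq h2)
      _ ≤ b * 4 := mul_le_mul_of_nonneg_left h3 hb0.le
      _ = 4 * b := by ring
  -- L := log(1/ε)
  set L := Real.log (1 / epsFull n) with hLdef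
  have hL : L = -Real.log (epsFull n) := by rw [hLdef, one_div, Real.log_inv]
  set F := Real.log (m.factorial : ℝ) with hFdef
  have hlogb : Real.log b = (m : ℝ) * x.log - F := by
    rw [hbdef, Real.log_div (by positivity) (ne_of_gt hfpos), Real.log_pow]
  have hlog4 : Real.log 4 ≤ 1.4 := by
    have : Real.log 4 = 2 * x := by
      rw [show (4 : ℝ) = 2 ^ 2 by norm_num, Real.log_pow, hxdef]; push_cast; ring
    rw [this]; linarith
  -- bounds on L
  have hLlow : F - 1.4 ≤ L := by
    have h1 : Real.log (epsFull n) ≤ Real.log (4 * b) := Real.log_le_log heps0 hup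
    have h2 : Real.log (4 * b) = Real.log 4 + Real.log b :=
      Real.log_mul (by norm_num) (ne_of_gt hb0)
    have hlogx : x.log < 0 := Real.log_neg hx0 hx1
    rw [hL]
    have : Real.log (epsFull n) ≤ 1.4 + ((m : ℝ) * x.log - F) := by
      rw [h2, hlogb] at h1; linarith
    have hnn : 0 ≤ (m : ℝ) * (-x.log) := mul_nonneg hmpos.le (neg_nonneg.2 hlogx.le)
    linarith
  have hLup : L ≤ F + (m : ℝ) := by
    have h1 : Real.log b ≤ Real.log (epsFull n) := Real.log_le_log hb0 hlow
    have hnegx : -x.log ≤ 1 := by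
      have : Real.log x⁻¹ ≤ x⁻¹ - 1 := Real.log_le_sub_one_of_pos (by positivity)
      rw [Real.log_inv] at this
      have hxi : x⁻¹ ≤ 2 := by
        rw [inv_le_comm₀ hx0 (by norm_num)]; linarith
      linarith
    rw [hL]
    rw [hlogb] at h1
    have hmm : (m : ℝ) * (-x.log) ≤ (m : ℝ) * 1 := mul_le_mul_of_nonneg_left hnegx hmpos.le
    linarith
  set t := Real.log (m : ℝ) with htdef
  have ht5 : (5 : ℝ) ≤ t := by
    rw [htdef, Real.le_log_iff_exp_le hmpos]
    have h1 : Real.exp 5 = Real.exp 1 ^ 5 := by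
      rw [Real.exp_one_pow]; norm_num
    have h2 : Real.exp 1 ^ 5 < 2.7182818286 ^ 5 := by
      have := Real.exp_one_lt_d9
      have h0 : (0 : ℝ) < Real.exp 1 := Real.exp_pos 1
      exact pow_lt_pow_left₀ this h0.le (by norm_num)
    have h3 : (2.7182818286 : ℝ) ^ 5 < 152 := by norm_num
    linarith
  have hFup : F ≤ (m : ℝ) * t := by
    have h1 : (m.factorial : ℝ) ≤ ((m : ℝ)) ^ m := by
      exact_mod_cast Nat.factorial_le_pow m
    calc F ≤ Real.log ((m : ℝ) ^ m) := Real.log_le_log hfpos h1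
      _ = (m : ℝ) * t := by rw [Real.log_pow, htdef]
  have hFlow : (m : ℝ) * (t - 1) ≤ F := log_factorial_ge m
  have hnm : (n : ℝ) = (m : ℝ) - 1 := by rw [hmdef]; push_cast; ring
  constructor
  · -- n < L
    have h4m : 4 * (m : ℝ) ≤ (t - 1) * m := mul_le_mul_of_nonneg_right (by linarith) hmpos.le
    linarith [hLlow, hFlow]
  · -- n * log L ≤ 2 * L
    have h4m : 4 * (m : ℝ) ≤ (t - 1) * m := mul_le_mul_of_nonneg_right (by linarith) hmpos.le
    have hLpos : (0 : ℝ) < L := by linarith [hLlow, hFlow]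
    set s := Real.sqrt (t + 1) with hsdef
    have hs2 : s ^ 2 = t + 1 := Real.sq_sqrt (by linarith)
    have hs0 : 0 ≤ s := Real.sqrt_nonneg _
    have h2s : 2 * s ≤ t := by
      have h1 : t + 1 ≤ (t / 2) ^ 2 := by nlinarith
      have h2 : s ≤ t / 2 := by
        calc s ≤ Real.sqrt ((t / 2) ^ 2) := Real.sqrt_le_sqrt h1
          _ = t / 2 := Real.sqrt_sq (by linarith)
      linarith
    have hlogL : Real.log L ≤ t + (2 * s - 2) := by
      have hLub : L ≤ (m : ℝ) * (t + 1) := by linarith [hLup, hFup]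
      have h1 : Real.log L ≤ Real.log ((m : ℝ) * (t + 1)) := Real.log_le_log hLpos hLub
      have h2 : Real.log ((m : ℝ) * (t + 1)) = t + Real.log (t + 1) := by
        rw [Real.log_mul (ne_of_gt hmpos) (by linarith), htdef]
      have h3 : Real.log (t + 1) ≤ 2 * s - 2 := by
        rw [hsdef]; exact log_le_two_sqrt (t + 1) (by linarith)
      linarith
    have hn0 : (0 : ℝ) ≤ (n : ℝ) := Nat.cast_nonneg n
    have hmain : (n : ℝ) * (t + (2 * s - 2)) ≤ 2 * ((m : ℝ) * (t - 1) - 1.4) := by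
      have h1 : (n : ℝ) * (2 * s) ≤ (n : ℝ) * t := mul_le_mul_of_nonneg_left h2s hn0
      have h2 : (n : ℝ) * t = (m : ℝ) * t - t := by rw [hnm]; ring
      have h3 : (n : ℝ) = (m : ℝ) - 1 := hnm
      linarith [ht5]
    calc (n : ℝ) * Real.log L ≤ (n : ℝ) * (t + (2 * s - 2)) :=
          mul_le_mul_of_nonneg_left hlogL hn0
      _ ≤ 2 * ((m : ℝ) * (t - 1) - 1.4) := hmain
      _ ≤ 2 * L := by linarith [hLlow, hFlow]
end

section
/- Fix k ≥ 1 and let (L_j)_{j≥1} and (L'_j)_{j≥1} be sequences of natural numbers with L'_k = L_k + 1 and L'_j = L_j for j ≠ k, all bounded by L. Then for every t ≥ 0, s_{\vec{L}'}(t) − s_{\vec{L}}(t) = Σ_{ν=k}^{∞} (t^ν / ν!) · α_{L_k} · ∏_{j=1, j≠k}^{ν} Λ_j, where Λ_j = Σ_{ℓ=0}^{L_j−1} α_ℓ. -/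
/-- `Λ_j = Σ_{ℓ=0}^{L_j−1} α_ℓ`, the sum of the coefficients retained at order `j`. -/
noncomputable def ΛOf (α : ℕ → ℝ) (Lk : ℕ → ℕ) (j : ℕ) : ℝ :=
  ∑ ℓ ∈ Finset.range (Lk j), α ℓ

/-- `s_{\vec L}(t) = Σ_{ν=0}^∞ (t^ν/ν!) ∏_{j=1}^ν Λ_j`. -/
noncomputable def sVec (α : ℕ → ℝ) (Lk : ℕ → ℕ) (t : ℝ) : ℝ :=
  ∑' ν : ℕ, t ^ ν / (Nat.factorial ν : ℝ) * ∏ j ∈ Finset.Icc 1 ν, ΛOf α Lk j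

lemma ΛOf_nonneg (α : ℕ → ℝ) (hα : ∀ ℓ, 0 ≤ α ℓ) (Lk : ℕ → ℕ) (j : ℕ) :
    0 ≤ ΛOf α Lk j := Finset.sum_nonneg fun _ _ => hα _

lemma summable_sVec_term (L : ℕ) (α : ℕ → ℝ) (hα : ∀ ℓ, 0 ≤ α ℓ)
    (Lk : ℕ → ℕ) (hbound : ∀ j, Lk j ≤ L) (t : ℝ) (ht : 0 ≤ t) :
    Summable (fun ν : ℕ =>
      t ^ ν / (Nat.factorial ν : ℝ) * ∏ j ∈ Finset.Icc 1 ν, ΛOf α Lk j) := by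
  set C := ∑ ℓ ∈ Finset.range L, α ℓ with hCdef
  have hC : 0 ≤ C := Finset.sum_nonneg fun _ _ => hα _
  have hle : ∀ j, ΛOf α Lk j ≤ C := fun j =>
    Finset.sum_le_sum_of_subset_of_nonneg (Finset.range_subset_range.2 (hbound j))
      (fun i _ _ => hα i)
  have hsum : Summable (fun ν : ℕ => (t * C) ^ ν / (Nat.factorial ν : ℝ)) :=
    Real.summable_pow_div_factorial (t * C)
  refine Summable.of_nonneg_of_le ?_ ?_ hsum
  · intro ν
    have h1 : 0 ≤ t ^ ν / (Nat.factorial ν : ℝ) := by positivity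
    exact mul_nonneg h1 (Finset.prod_nonneg fun j _ => ΛOf_nonneg α hα Lk j)
  · intro ν
    have hfac : (0 : ℝ) < Nat.factorial ν := by positivity
    have hprod : ∏ j ∈ Finset.Icc 1 ν, ΛOf α Lk j ≤ C ^ ν := by
      calc ∏ j ∈ Finset.Icc 1 ν, ΛOf α Lk j
          ≤ ∏ j ∈ Finset.Icc 1 ν, C :=
            Finset.prod_le_prod (fun j _ => ΛOf_nonneg α hα Lk j) (fun j _ => hle j)
        _ = C ^ ν := by
            rw [Finset.prod_const, Nat.card_Icc]; norm_num
    calc t ^ ν / (Nat.factorial ν : ℝ) * ∏ j ∈ Finset.Icc 1 ν, ΛOf α Lk j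
        ≤ t ^ ν / (Nat.factorial ν : ℝ) * C ^ ν := by
          apply mul_le_mul_of_nonneg_left hprod; positivity
      _ = (t * C) ^ ν / (Nat.factorial ν : ℝ) := by
          rw [mul_pow]; ring

/-- **Greedy insertion criterion.** If `\vec L'` is obtained from `\vec L` by including one
additional term at order `k ≥ 1` (i.e. `L'_k = L_k + 1` and `L'_j = L_j` for `j ≠ k`, all
bounded by `L`), then for every `t ≥ 0`,
`s_{\vec L'}(t) − s_{\vec L}(t) = Σ_{ν=k}^∞ (t^ν/ν!) · α_{L_k} · ∏_{j=1, j≠k}^ν Λ_j`. -/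
theorem greedy_insertion_gain (L : ℕ) (α : ℕ → ℝ) (hα : ∀ ℓ, 0 ≤ α ℓ)
    (k : ℕ) (hk : 1 ≤ k) (Lk Lk' : ℕ → ℕ)
    (hbound : ∀ j, Lk j ≤ L) (hbound' : ∀ j, Lk' j ≤ L)
    (hk' : Lk' k = Lk k + 1) (hother : ∀ j, j ≠ k → Lk' j = Lk j)
    (t : ℝ) (ht : 0 ≤ t) :
    sVec α Lk' t - sVec α Lk t =
      ∑' m : ℕ, t ^ (k + m) / (Nat.factorial (k + m) : ℝ) * α (Lk k) *
        ∏ j ∈ (Finset.Icc 1 (k + m)).erase k, ΛOf α Lk j := by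
  set f := fun ν : ℕ =>
    t ^ ν / (Nat.factorial ν : ℝ) * ∏ j ∈ Finset.Icc 1 ν, ΛOf α Lk j with hf
  set f' := fun ν : ℕ =>
    t ^ ν / (Nat.factorial ν : ℝ) * ∏ j ∈ Finset.Icc 1 ν, ΛOf α Lk' j with hf'
  have hsf : Summable f := summable_sVec_term L α hα Lk hbound t ht
  have hsf' : Summable f' := summable_sVec_term L α hα Lk' hbound' t ht
  set d := fun ν : ℕ => f' ν - f ν with hd
  have hsd : Summable d := hsf'.sub hsf
  have hstep : sVec α Lk' t - sVec α Lk t = ∑' ν, d ν := by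
    rw [sVec, sVec]
    exact (Summable.tsum_sub hsf' hsf).symm
  -- d vanishes below k
  have hzero : ∀ ν < k, d ν = 0 := by
    intro ν hν
    have hprod : ∏ j ∈ Finset.Icc 1 ν, ΛOf α Lk' j
        = ∏ j ∈ Finset.Icc 1 ν, ΛOf α Lk j := by
      apply Finset.prod_congr rfl
      intro j hj
      have hj' : j ≤ ν := (Finset.mem_Icc.1 hj).2
      have hjk : j ≠ k := by omega
      unfold ΛOf; rw [hother j hjk]
    simp [hd, hf, hf', hprod]
  -- d at k + m
  have hval : ∀ m : ℕ, d (k + m) =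
      t ^ (k + m) / (Nat.factorial (k + m) : ℝ) * α (Lk k) *
        ∏ j ∈ (Finset.Icc 1 (k + m)).erase k, ΛOf α Lk j := by
    intro m
    have hkmem : k ∈ Finset.Icc 1 (k + m) := Finset.mem_Icc.2 ⟨hk, Nat.le_add_right _ _⟩
    have hprod' : ∏ j ∈ (Finset.Icc 1 (k + m)).erase k, ΛOf α Lk' j
        = ∏ j ∈ (Finset.Icc 1 (k + m)).erase k, ΛOf α Lk j := by
      apply Finset.prod_congr rfl
      intro j hj
      have hjk : j ≠ k := (Finset.mem_erase.1 hj).1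
      unfold ΛOf; rw [hother j hjk]
    have hΛk : ΛOf α Lk' k = ΛOf α Lk k + α (Lk k) := by
      unfold ΛOf; rw [hk', Finset.sum_range_succ]
    have h1 : ∏ j ∈ Finset.Icc 1 (k + m), ΛOf α Lk' j
        = (ΛOf α Lk k + α (Lk k)) * ∏ j ∈ (Finset.Icc 1 (k + m)).erase k, ΛOf α Lk j := by
      rw [← Finset.mul_prod_erase _ _ hkmem, hΛk, hprod']
    have h2 : ∏ j ∈ Finset.Icc 1 (k + m), ΛOf α Lk j
        = ΛOf α Lk k * ∏ j ∈ (Finset.Icc 1 (k + m)).erase k, ΛOf α Lk j :=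
      (Finset.mul_prod_erase _ _ hkmem).symm
    simp only [hd, hf, hf', h1, h2]
    ring
  rw [hstep, ← Summable.sum_add_tsum_nat_add k hsd]
  have hsum0 : ∑ i ∈ Finset.range k, d i = 0 := by
    apply Finset.sum_eq_zero
    intro i hi
    exact hzero i (Finset.mem_range.1 hi)
  rw [hsum0, zero_add]
  apply tsum_congr
  intro m
  rw [show m + k = k + m from Nat.add_comm m k, hval m]
end

section
/- Let U be a unitary d×d complex matrix, let Ũ be any d×d complex matrix, and let s > 0. Then (3/s)Ũ − (4/s³)Ũ Ũ* Ũ − U = a·U + b·Δ + c·UΔ*U + c·(ΔΔ*U + ΔU*Δ + UΔ*Δ + ΔΔ*Δ), where Δ = Ũ − U, a = (3s² − 4 − s³)/s³ = −(s+1)(s−2)²/s³, b = (3s² − 8)/s³, and c = −4/s³. -/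
open Matrix
open scoped Matrix.Norms.L2Operator

/-- **Exact expansion of the effective amplified operator around the target unitary.**
For `U` unitary, `Ũ` arbitrary, `s > 0`, `Δ = Ũ − U`,
`a = (3s² − 4 − s³)/s³`, `b = (3s² − 8)/s³`, `c = −4/s³`, one has
`(3/s)Ũ − (4/s³)ŨŨ*Ũ − U = aU + bΔ + cUΔ*U + c(ΔΔ*U + ΔU*Δ + UΔ*Δ + ΔΔ*Δ)`,
and moreover `a = −(s+1)(s−2)²/s³`. -/
theorem amplified_operator_expansion (d : ℕ) (U Ut : Matrix (Fin d) (Fin d) ℂ)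
    (hU : U ∈ Matrix.unitaryGroup (Fin d) ℂ) (s : ℝ) (hs : 0 < s) :
    (((3 / s : ℝ) : ℂ) • Ut - ((4 / s ^ 3 : ℝ) : ℂ) • (Ut * Utᴴ * Ut) - U =
      (((3 * s ^ 2 - 4 - s ^ 3) / s ^ 3 : ℝ) : ℂ) • U +
        (((3 * s ^ 2 - 8) / s ^ 3 : ℝ) : ℂ) • (Ut - U) +
        ((-4 / s ^ 3 : ℝ) : ℂ) • (U * (Ut - U)ᴴ * U) +
        ((-4 / s ^ 3 : ℝ) : ℂ) •
          ((Ut - U) * (Ut - U)ᴴ * U + (Ut - U) * Uᴴ * (Ut - U) +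
            U * (Ut - U)ᴴ * (Ut - U) + (Ut - U) * (Ut - U)ᴴ * (Ut - U))) ∧
    (3 * s ^ 2 - 4 - s ^ 3) / s ^ 3 = -((s + 1) * (s - 2) ^ 2) / s ^ 3 := by
  have hne : (s:ℝ) ≠ 0 := ne_of_gt hs
  have h1 : Uᴴ * U = 1 := hU.1
  have h2 : U * Uᴴ = 1 := hU.2
  constructor
  · simp only [conjTranspose_sub, sub_mul, mul_sub, h1, h2, mul_one, one_mul,
      Matrix.mul_assoc]
    match_scalars <;> push_cast <;> field_simp [Complex.ofReal_ne_zero.mpr hne] <;> ring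
  · have h : 3 * s ^ 2 - 4 - s ^ 3 = -((s + 1) * (s - 2) ^ 2) := by ring
    rw [h]
end
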